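/- arXiv:1610.02599 — 4 statements merged into one kernel-verified Lean document; each statement's English description precedes it below -/
import Mathlib

section
/- Let R = k[[x,y]]/(x⁵, xy) over a field k, and let M = R/x³R. Then x·Ext²_R(M, M) ≠ 0. -/
open CategoryTheory MvPowerSeries

set_option maxHeartbeats 1000000
set_option synthInstance.maxHeartbeats 400000

namespace Stmt7

variable (k : Type) [Field k]

abbrev P : Type := MvPowerSeries (Fin 2) k

noncomputable def Xp : P k := MvPowerSeries.X 0
noncomputable def Yp : P k := MvPowerSeries.X 1

noncomputable def I : Ideal (P k) := Ideal.span {Xp k ^ 5, Xp k * Yp k}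

abbrev R : Type := P k ⧸ I k

noncomputable def x : R k := Ideal.Quotient.mk (I k) (Xp k)
noncomputable def y : R k := Ideal.Quotient.mk (I k) (Yp k)

variable {k}

lemma Xp_pow_eq (b : ℕ) : (Xp k) ^ b = monomial (Finsupp.single 0 b) 1 :=
  MvPowerSeries.X_pow_eq 0 b

lemma Xp_eq : (Xp k) = monomial (Finsupp.single 0 1) 1 := by
  rw [← pow_one (Xp k)]; exact Xp_pow_eq 1

lemma XYp_eq : (Xp k * Yp k) = monomial (Finsupp.single 0 1 + Finsupp.single 1 1) 1 := by
  rw [Xp_eq, Yp, MvPowerSeries.X, monomial_mul_monomial, one_mul]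

lemma single0_le_iff (b : ℕ) (m : Fin 2 →₀ ℕ) :
    (Finsupp.single (0 : Fin 2) b) ≤ m ↔ b ≤ m 0 := Finsupp.single_le_iff

lemma single1_le_iff (b : ℕ) (m : Fin 2 →₀ ℕ) :
    (Finsupp.single (1 : Fin 2) b) ≤ m ↔ b ≤ m 1 := Finsupp.single_le_iff

lemma pair_le_iff (a b : ℕ) (m : Fin 2 →₀ ℕ) :
    (Finsupp.single (0 : Fin 2) a + Finsupp.single 1 b) ≤ m ↔ a ≤ m 0 ∧ b ≤ m 1 := by
  rw [Finsupp.le_def, Fin.forall_fin_two]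
  simp [Finsupp.single_apply]

lemma sub_single0_apply1 (b : ℕ) (m : Fin 2 →₀ ℕ) :
    (m - Finsupp.single (0 : Fin 2) b) 1 = m 1 := by
  rw [Finsupp.tsub_apply, Finsupp.single_apply]
  simp

/-- P1: coefficients of elements of `I` vanish on pure `X`-monomials of degree `< 5`
and on monomials with no `X`. -/
lemma coeff_eq_zero_of_mem_I {F : P k} (hF : F ∈ I k) (d : Fin 2 →₀ ℕ)
    (hd : (d 1 = 0 ∧ d 0 < 5) ∨ d 0 = 0) : coeff d F = 0 := by
  rw [I, Ideal.mem_span_pair] at hF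
  obtain ⟨u, v, rfl⟩ := hF
  rw [map_add, Xp_pow_eq, XYp_eq, coeff_mul_monomial, coeff_mul_monomial]
  have hA : ¬ ((Finsupp.single (0 : Fin 2) 5) ≤ d) := by
    rw [single0_le_iff]; omega
  have hB : ¬ ((Finsupp.single (0 : Fin 2) 1 + Finsupp.single 1 1) ≤ d) := by
    rw [pair_le_iff]; omega
  rw [if_neg hA, if_neg hB]
  simp

/-- P4: the converse. -/
lemma mem_I_of_coeff_eq_zero {F : P k}
    (hF : ∀ d : Fin 2 →₀ ℕ, (d 1 = 0 ∧ d 0 < 5) ∨ d 0 = 0 → coeff d F = 0) :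
    F ∈ I k := by
  classical
  set p : P k := fun d => if d 1 = 0 then coeff (d + Finsupp.single 0 5) F else 0 with hp
  set q : P k := fun d => coeff (d + (Finsupp.single 0 1 + Finsupp.single 1 1)) F with hq
  have hcoeffp : ∀ d, coeff d p = if d 1 = 0 then coeff (d + Finsupp.single 0 5) F else 0 :=
    fun d => rfl
  have hcoeffq : ∀ d, coeff d q = coeff (d + (Finsupp.single 0 1 + Finsupp.single 1 1)) F :=
    fun d => rfl
  have : F = monomial (Finsupp.single 0 5) 1 * p
      + monomial (Finsupp.single 0 1 + Finsupp.single 1 1) 1 * q := by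
    ext m
    rw [map_add, coeff_monomial_mul, coeff_monomial_mul]
    by_cases h1 : m 1 = 0
    · have hB : ¬ ((Finsupp.single (0 : Fin 2) 1 + Finsupp.single 1 1) ≤ m) := by
        rw [pair_le_iff]; omega
      rw [if_neg hB]
      by_cases h0 : 5 ≤ m 0
      · have hA : (Finsupp.single (0 : Fin 2) 5) ≤ m := by rw [single0_le_iff]; omega
        rw [if_pos hA, hcoeffp, if_pos (by rw [sub_single0_apply1]; omega),
          tsub_add_cancel_of_le hA]
        ring
      · have hA : ¬ ((Finsupp.single (0 : Fin 2) 5) ≤ m) := by rw [single0_le_iff]; omega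
        rw [if_neg hA, hF m (Or.inl ⟨h1, by omega⟩)]
        ring
    · by_cases h0 : 1 ≤ m 0
      · have hB : ((Finsupp.single (0 : Fin 2) 1 + Finsupp.single 1 1) ≤ m) := by
          rw [pair_le_iff]; omega
        rw [if_pos hB, hcoeffq, tsub_add_cancel_of_le hB]
        by_cases h5 : Finsupp.single (0:Fin 2) 5 ≤ m
        · rw [if_pos h5, hcoeffp, if_neg (by rw [sub_single0_apply1]; omega)]
          ring
        · rw [if_neg h5]; ring
      · have hB : ¬ ((Finsupp.single (0 : Fin 2) 1 + Finsupp.single 1 1) ≤ m) := by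
          rw [pair_le_iff]; omega
        have hA : ¬ ((Finsupp.single (0 : Fin 2) 5) ≤ m) := by rw [single0_le_iff]; omega
        rw [if_neg hB, if_neg hA, hF m (Or.inr (by omega))]
        ring
  rw [this, I]
  apply Ideal.add_mem
  · exact Ideal.mul_mem_right _ _ (Ideal.subset_span (by rw [Xp_pow_eq]; left; rfl))
  · exact Ideal.mul_mem_right _ _ (Ideal.subset_span (by rw [XYp_eq]; right; rfl))

/-- P2: if the pure-`X` coefficients of degree `< b` vanish, then `F ∈ (X^b, Y)`. -/
lemma mem_span_pow_Y_of_coeff {F : P k} (b : ℕ)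
    (hF : ∀ d : Fin 2 →₀ ℕ, d 1 = 0 → d 0 < b → coeff d F = 0) :
    F ∈ Ideal.span {(Xp k) ^ b, Yp k} := by
  classical
  set g : P k := fun d => if d 1 = 0 then coeff (d + Finsupp.single 0 b) F else 0 with hg
  set h : P k := fun d => coeff (d + Finsupp.single 1 1) F with hh
  have hcoeffg : ∀ d, coeff d g = if d 1 = 0 then coeff (d + Finsupp.single 0 b) F else 0 :=
    fun d => rfl
  have hcoeffh : ∀ d, coeff d h = coeff (d + Finsupp.single 1 1) F := fun d => rfl
  have key : F = monomial (Finsupp.single 0 b) 1 * g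
      + monomial (Finsupp.single 1 1) 1 * h := by
    ext m
    rw [map_add, coeff_monomial_mul, coeff_monomial_mul]
    by_cases h1 : m 1 = 0
    · have hB : ¬ ((Finsupp.single (1 : Fin 2) 1) ≤ m) := by rw [single1_le_iff]; omega
      rw [if_neg hB]
      by_cases h0 : b ≤ m 0
      · have hA : (Finsupp.single (0 : Fin 2) b) ≤ m := by rw [single0_le_iff]; omega
        rw [if_pos hA, hcoeffg, if_pos (by rw [sub_single0_apply1]; omega),
          tsub_add_cancel_of_le hA]
        ring
      · have hA : ¬ ((Finsupp.single (0 : Fin 2) b) ≤ m) := by rw [single0_le_iff]; omega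
        rw [if_neg hA, hF m h1 (by omega)]
        ring
    · have hB : ((Finsupp.single (1 : Fin 2) 1) ≤ m) := by rw [single1_le_iff]; omega
      rw [if_pos hB, hcoeffh, tsub_add_cancel_of_le hB]
      by_cases h5 : Finsupp.single (0:Fin 2) b ≤ m
      · rw [if_pos h5, hcoeffg, if_neg (by rw [sub_single0_apply1]; omega)]
        ring
      · rw [if_neg h5]; ring
  rw [key]
  exact Ideal.add_mem _
    (Ideal.mul_mem_right _ _ (Ideal.subset_span (by rw [Xp_pow_eq]; left; rfl)))
    (Ideal.mul_mem_right _ _ (Ideal.subset_span (by rw [Yp, MvPowerSeries.X]; right; rfl)))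

/-- P3: if the coefficients with no `X` vanish, then `F ∈ (X)`. -/
lemma mem_span_X_of_coeff {F : P k}
    (hF : ∀ d : Fin 2 →₀ ℕ, d 0 = 0 → coeff d F = 0) :
    F ∈ Ideal.span {Xp k} := by
  classical
  set g : P k := fun d => coeff (d + Finsupp.single 0 1) F with hg
  have hcoeffg : ∀ d, coeff d g = coeff (d + Finsupp.single 0 1) F := fun d => rfl
  have key : F = monomial (Finsupp.single 0 1) 1 * g := by
    ext m
    rw [coeff_monomial_mul]
    by_cases h0 : 1 ≤ m 0
    · have hA : (Finsupp.single (0 : Fin 2) 1) ≤ m := by rw [single0_le_iff]; omega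
      rw [if_pos hA, hcoeffg, tsub_add_cancel_of_le hA]
      ring
    · have hA : ¬ ((Finsupp.single (0 : Fin 2) 1) ≤ m) := by rw [single0_le_iff]; omega
      rw [if_neg hA, hF m (by omega)]
  rw [key, ← Xp_eq]
  exact Ideal.mul_mem_right _ _ (Ideal.subset_span rfl)

/-! ### Facts in `R` -/

lemma x_mul_y : x k * y k = 0 := by
  rw [x, y, ← map_mul, Ideal.Quotient.eq_zero_iff_mem]
  exact Ideal.subset_span (by right; rfl)

lemma x_pow_five : x k ^ 5 = 0 := by
  rw [x, ← map_pow, Ideal.Quotient.eq_zero_iff_mem]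
  exact Ideal.subset_span (by left; rfl)

/-- helper: shifting coefficients under multiplication by a power of `X`. -/
lemma coeff_mul_Xpow (F : P k) (b : ℕ) (d : Fin 2 →₀ ℕ) :
    coeff (d + Finsupp.single 0 b) (F * (Xp k) ^ b) = coeff d F := by
  rw [Xp_pow_eq, coeff_mul_monomial, if_pos (le_add_self : _ ≤ d + _),
    add_tsub_cancel_right, mul_one]

/-- (C): `(x) ∩ (y) = 0`. -/
lemma zx_eq_zero_of_zx_eq_wy {z w : R k} (h : z * x k = w * y k) :
    z * x k = 0 ∧ w * y k = 0 := by
  obtain ⟨Z, rfl⟩ := Ideal.Quotient.mk_surjective z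
  obtain ⟨W, rfl⟩ := Ideal.Quotient.mk_surjective w
  have hmem : Z * Xp k - W * Yp k ∈ I k := by
    rw [← Ideal.Quotient.eq_zero_iff_mem, map_sub, map_mul, map_mul]
    rw [x, y] at h
    rw [← h]; ring
  have hZX : Z * Xp k ∈ I k := by
    apply mem_I_of_coeff_eq_zero
    intro d hd
    rcases hd with ⟨h1, h0⟩ | h0
    · have hy : coeff d (W * Yp k) = 0 := by
        rw [Yp, MvPowerSeries.X, coeff_mul_monomial]
        have : ¬ ((Finsupp.single (1 : Fin 2) 1) ≤ d) := by rw [single1_le_iff]; omega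
        rw [if_neg this]
      have := coeff_eq_zero_of_mem_I hmem d (Or.inl ⟨h1, h0⟩)
      rw [map_sub, hy, sub_zero] at this
      exact this
    · rw [Xp, MvPowerSeries.X, coeff_mul_monomial]
      have : ¬ ((Finsupp.single (0 : Fin 2) 1) ≤ d) := by rw [single0_le_iff]; omega
      rw [if_neg this]
  constructor
  · rw [x, ← map_mul, Ideal.Quotient.eq_zero_iff_mem]; exact hZX
  · have hz : Ideal.Quotient.mk (I k) Z * x k = 0 := by
      rw [x, ← map_mul, Ideal.Quotient.eq_zero_iff_mem]; exact hZX
    rw [← h, hz]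

lemma add_single0_apply1 (d : Fin 2 →₀ ℕ) (a : ℕ) :
    (d + Finsupp.single (0 : Fin 2) a) 1 = d 1 := by
  rw [Finsupp.add_apply, Finsupp.single_apply, if_neg (by decide)]; ring

lemma add_single0_apply0 (d : Fin 2 →₀ ℕ) (a : ℕ) :
    (d + Finsupp.single (0 : Fin 2) a) 0 = d 0 + a := by
  rw [Finsupp.add_apply, Finsupp.single_apply, if_pos rfl]

lemma add_single1_apply0 (d : Fin 2 →₀ ℕ) (a : ℕ) :
    (d + Finsupp.single (1 : Fin 2) a) 0 = d 0 := by
  rw [Finsupp.add_apply, Finsupp.single_apply, if_neg (by decide)]; ring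

lemma coeff_mul_Y (F : P k) (d : Fin 2 →₀ ℕ) :
    coeff (d + Finsupp.single 1 1) (F * Yp k) = coeff d F := by
  rw [Yp, MvPowerSeries.X, coeff_mul_monomial, if_pos (le_add_self : _ ≤ d + _),
    add_tsub_cancel_right, mul_one]

/-- (D)/(F): annihilator of `x^a`. -/
lemma mem_span_of_mul_pow_eq_zero {c : R k} (a b : ℕ) (hab : a + b = 5)
    (h : c * x k ^ a = 0) : c ∈ Ideal.span {x k ^ b, y k} := by
  obtain ⟨C, rfl⟩ := Ideal.Quotient.mk_surjective c
  have hmem : C * (Xp k) ^ a ∈ I k := by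
    rw [← Ideal.Quotient.eq_zero_iff_mem, map_mul, map_pow]
    exact h
  have hC : C ∈ Ideal.span {(Xp k) ^ b, Yp k} := by
    apply mem_span_pow_Y_of_coeff
    intro d h1 h0
    rw [← coeff_mul_Xpow C a d]
    exact coeff_eq_zero_of_mem_I hmem _
      (Or.inl ⟨by rw [add_single0_apply1]; exact h1, by rw [add_single0_apply0]; omega⟩)
  rw [Ideal.mem_span_pair] at hC ⊢
  obtain ⟨u, v, huv⟩ := hC
  exact ⟨Ideal.Quotient.mk _ u, Ideal.Quotient.mk _ v, by
    rw [x, y, ← map_pow, ← map_mul, ← map_mul, ← map_add, huv]⟩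

/-- (E): annihilator of `y`. -/
lemma mem_span_x_of_mul_y_eq_zero {c : R k} (h : c * y k = 0) :
    c ∈ Ideal.span {x k} := by
  obtain ⟨C, rfl⟩ := Ideal.Quotient.mk_surjective c
  have hmem : C * Yp k ∈ I k := by
    rw [← Ideal.Quotient.eq_zero_iff_mem, map_mul]
    exact h
  have hC : C ∈ Ideal.span {Xp k} := by
    apply mem_span_X_of_coeff
    intro d h0
    rw [← coeff_mul_Y C d]
    exact coeff_eq_zero_of_mem_I hmem _ (Or.inr (by rw [add_single1_apply0]; exact h0))
  rw [Ideal.mem_span_singleton] at hC ⊢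
  obtain ⟨u, hu⟩ := hC
  exact ⟨Ideal.Quotient.mk _ u, by rw [x, ← map_mul, hu]⟩

/-- (G): `x² ∉ (x³)`. -/
lemma x_sq_not_mem : x k ^ 2 ∉ Ideal.span {x k ^ 3} := by
  intro hmem
  rw [Ideal.mem_span_singleton] at hmem
  obtain ⟨c, hc⟩ := hmem
  obtain ⟨C, rfl⟩ := Ideal.Quotient.mk_surjective c
  have : (Xp k) ^ 2 - (Xp k) ^ 3 * C ∈ I k := by
    rw [← Ideal.Quotient.eq_zero_iff_mem, map_sub, map_mul, map_pow, map_pow, sub_eq_zero]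
    exact hc
  have h2 := coeff_eq_zero_of_mem_I this (Finsupp.single 0 2)
    (Or.inl ⟨by rw [Finsupp.single_apply, if_neg (by decide)], by
      rw [Finsupp.single_apply, if_pos rfl]; omega⟩)
  rw [map_sub, Xp_pow_eq, Xp_pow_eq, coeff_monomial_mul, MvPowerSeries.coeff_monomial_same,
    if_neg (by rw [single0_le_iff, Finsupp.single_apply, if_pos rfl]; omega), sub_zero] at h2
  exact one_ne_zero h2

noncomputable section

open HomologicalComplex ChainComplex

variable (k)

def J : Ideal (R k) := Ideal.span {x k ^ 3}

abbrev M : Type := R k ⧸ J k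

def Mmod : ModuleCat (R k) := ModuleCat.of (R k) (M k)

def d1lin : R k →ₗ[R k] R k := LinearMap.lsmul (R k) (R k) (x k ^ 3)

def d2lin : R k × R k →ₗ[R k] R k :=
  ((LinearMap.lsmul (R k) (R k) (x k ^ 2)).comp (LinearMap.fst (R k) (R k) (R k))) +
  ((LinearMap.lsmul (R k) (R k) (y k)).comp (LinearMap.snd (R k) (R k) (R k)))

lemma d2lin_apply (a b : R k) : d2lin k (a, b) = x k ^ 2 * a + y k * b := rfl

def K : Submodule (R k) (R k × R k) := LinearMap.ker (d2lin k)

abbrev Kmod : ModuleCat (R k) := ModuleCat.of (R k) (K k)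

def Q : ProjectiveResolution (Kmod k) := ProjectiveResolution.of (Kmod k)

def FF : ℕ → ModuleCat (R k)
  | 0 => ModuleCat.of (R k) (R k)
  | 1 => ModuleCat.of (R k) (R k)
  | 2 => ModuleCat.of (R k) (R k × R k)
  | (n+3) => (Q k).complex.X n

def pi0 : (Q k).complex.X 0 ⟶ Kmod k := (Q k).π.f 0

def d3hom : (Q k).complex.X 0 ⟶ ModuleCat.of (R k) (R k × R k) :=
  pi0 k ≫ (ModuleCat.ofHom (K k).subtype : Kmod k ⟶ ModuleCat.of (R k) (R k × R k))

def dd : ∀ n, FF k (n+1) ⟶ FF k n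
  | 0 => (ModuleCat.ofHom (d1lin k) : ModuleCat.of (R k) (R k) ⟶ ModuleCat.of (R k) (R k))
  | 1 => (ModuleCat.ofHom (d2lin k) : ModuleCat.of (R k) (R k × R k) ⟶ ModuleCat.of (R k) (R k))
  | 2 => d3hom k
  | (n+3) => (Q k).complex.d (n+1) n

lemma dd_sq : ∀ n, dd k (n+1) ≫ dd k n = 0 := by
  intro n
  match n with
  | 0 =>
    refine ModuleCat.hom_ext <| LinearMap.ext fun c => ?_
    show d1lin k (d2lin k c) = 0
    rw [d1lin]
    obtain ⟨a, b⟩ := c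
    rw [d2lin_apply]
    show x k ^ 3 • (x k ^ 2 * a + y k * b) = 0
    rw [smul_eq_mul]
    have h1 : x k ^ 3 * (x k ^ 2 * a) = x k ^ 5 * a := by ring
    have h2 : x k ^ 3 * (y k * b) = x k ^ 2 * (x k * y k) * b := by ring
    rw [mul_add, h1, h2, x_pow_five, x_mul_y, zero_mul, mul_zero, zero_mul, add_zero]
  | 1 =>
    refine ModuleCat.hom_ext <| LinearMap.ext fun z => ?_
    show d2lin k ((K k).subtype (pi0 k z)) = 0
    exact (pi0 k z).2
  | 2 =>
    show (Q k).complex.d 1 0 ≫ d3hom k = 0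
    rw [d3hom]
    have : (Q k).complex.d 1 0 ≫ pi0 k = 0 := (Q k).complex_d_comp_π_f_zero
    exact (Category.assoc _ _ _).symm.trans
      ((congrArg (· ≫ ModuleCat.ofHom (K k).subtype) this).trans Limits.zero_comp)
  | (n+3) =>
    show (Q k).complex.d (n+2) (n+1) ≫ (Q k).complex.d (n+1) n = 0
    exact (Q k).complex.d_comp_d _ _ _

def Cplx : ChainComplex (ModuleCat (R k)) ℕ := ChainComplex.of (FF k) (dd k) (dd_sq k)

def piM : Cplx k ⟶ (ChainComplex.single₀ (ModuleCat (R k))).obj (Mmod k) :=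
  (ChainComplex.toSingle₀Equiv (Cplx k) (Mmod k)).symm
    ⟨(ModuleCat.ofHom (J k).mkQ : ModuleCat.of (R k) (R k) ⟶ Mmod k), by
      rw [show (Cplx k).d 1 0 = dd k 0 from ChainComplex.of_d (FF k) (dd k) 0]
      refine ModuleCat.hom_ext <| LinearMap.ext fun c => ?_
      show (J k).mkQ (d1lin k c) = 0
      rw [Submodule.mkQ_apply, Submodule.Quotient.mk_eq_zero]
      exact Ideal.mul_mem_right _ _ (Ideal.subset_span rfl)⟩

lemma proj_R : CategoryTheory.Projective (ModuleCat.of (R k) (R k)) :=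
  ModuleCat.projective_of_free (Module.Basis.singleton Unit (R k))

lemma proj_RR : CategoryTheory.Projective (ModuleCat.of (R k) (R k × R k)) :=
  ModuleCat.projective_of_free ((Module.Basis.singleton Unit (R k)).prod (Module.Basis.singleton Unit (R k)))

instance Cplx_projective (n : ℕ) : CategoryTheory.Projective ((Cplx k).X n) := by
  match n with
  | 0 => exact proj_R k
  | 1 => exact proj_R k
  | 2 => exact proj_RR k
  | (n+3) => exact (Q k).projective n

lemma Cplx_d_eq (m : ℕ) : (Cplx k).d (m+1) m = dd k m := ChainComplex.of_d (FF k) (dd k) m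

lemma Cplx_exactAt_succ (n : ℕ) : (Cplx k).ExactAt (n + 1) := by
  rw [HomologicalComplex.exactAt_iff' _ (n+2) (n+1) n (by simp) (by simp)]
  rw [ShortComplex.moduleCat_exact_iff]
  intro c hc
  dsimp [HomologicalComplex.sc', HomologicalComplex.shortComplexFunctor'] at c hc ⊢
  rw [Cplx_d_eq] at hc ⊢
  match n with
  | 0 =>
    -- c : R with x³ • c = 0; find (a,b) with d2lin (a,b) = c
    have hc' : (show R k from c) * x k ^ 3 = 0 := by
      rw [mul_comm]
      exact hc
    have := mem_span_of_mul_pow_eq_zero 3 2 rfl hc'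
    rw [Ideal.mem_span_pair] at this
    obtain ⟨u, v, huv⟩ := this
    refine ⟨(u, v), ?_⟩
    show x k ^ 2 * u + y k * v = (show R k from c)
    rw [mul_comm (x k ^ 2) u, mul_comm (y k) v]
    exact huv
  | 1 =>
    -- c : R × R in the kernel of d2lin
    have hcK : c ∈ K k := hc
    have hsurj : Function.Surjective (pi0 k) :=
      (ModuleCat.epi_iff_surjective ((Q k).π.f 0)).1 inferInstance
    obtain ⟨z, hz⟩ := hsurj ⟨c, hcK⟩
    refine ⟨z, ?_⟩
    show (K k).subtype (pi0 k z) = c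
    rw [hz]
    rfl
  | 2 =>
    -- c : Q.X 0 with d3hom c = 0
    have hc0 : pi0 k c = 0 := by
      apply Subtype.ext
      exact hc
    have hQ := (Q k).exact₀
    rw [ShortComplex.moduleCat_exact_iff] at hQ
    obtain ⟨w, hw⟩ := hQ c hc0
    exact ⟨w, hw⟩
  | (m+3) =>
    have hQ := (Q k).exact_succ m
    rw [ShortComplex.moduleCat_exact_iff] at hQ
    obtain ⟨w, hw⟩ := hQ c hc
    exact ⟨w, hw⟩

lemma piM_f_zero : (piM k).f 0 = (ModuleCat.ofHom (J k).mkQ : ModuleCat.of (R k) (R k) ⟶ Mmod k) := by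
  rw [piM]
  exact ChainComplex.toSingle₀Equiv_symm_apply_f_zero _ _

lemma Cplx_quasiIsoAt_zero : QuasiIsoAt (piM k) 0 := by
  rw [ChainComplex.quasiIsoAt₀_iff, ShortComplex.quasiIso_iff_of_zeros']
  · constructor
    · rw [ShortComplex.moduleCat_exact_iff]
      intro c0 hc0
      dsimp [HomologicalComplex.shortComplexFunctor'] at c0 hc0 ⊢
      rw [piM_f_zero] at hc0
      have hc : (J k).mkQ (show R k from c0) = 0 := hc0
      have hmem : (show R k from c0) ∈ J k := by
        rwa [Submodule.mkQ_apply, Submodule.Quotient.mk_eq_zero] at hc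
      rw [J, Ideal.mem_span_singleton'] at hmem
      obtain ⟨u, hu⟩ := hmem
      refine ⟨u, ?_⟩
      rw [Cplx_d_eq]
      show x k ^ 3 * u = (show R k from c0)
      rw [mul_comm]
      exact hu
    · have : Function.Surjective ((J k).mkQ) := Submodule.mkQ_surjective _
      rw [ModuleCat.epi_iff_surjective]
      dsimp [HomologicalComplex.shortComplexFunctor']
      rw [piM_f_zero]
      exact this
  · rfl
  · rfl
  · rfl

def res : CategoryTheory.ProjectiveResolution (Mmod k) where
  complex := Cplx k
  projective := Cplx_projective k
  π := piM k
  quasiIso := ⟨fun n => by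
    cases n with
    | zero => exact Cplx_quasiIsoAt_zero k
    | succ n =>
      rw [quasiIsoAt_iff_exactAt']
      · exact Cplx_exactAt_succ k n
      · exact ChainComplex.exactAt_succ_single_obj _ _⟩

/-! ### The cocycle and non-vanishing -/

lemma xi_vanish (a b : R k) (h : x k ^ 2 * a + y k * b = 0) :
    (J k).mkQ (x k * a) = 0 := by
  have hz : (a * x k) * x k = (-b) * y k := by
    have : (a * x k) * x k = x k ^ 2 * a := by ring
    rw [this]
    linear_combination h
  have h0 := (zx_eq_zero_of_zx_eq_wy hz).1
  have ha : a * x k ^ 2 = 0 := by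
    rw [← h0]; ring
  have := mem_span_of_mul_pow_eq_zero 2 3 rfl ha
  rw [Ideal.mem_span_pair] at this
  obtain ⟨u, v, huv⟩ := this
  rw [Submodule.mkQ_apply, Submodule.Quotient.mk_eq_zero, J, Ideal.mem_span_singleton']
  refine ⟨u * x k, ?_⟩
  have : x k * a = u * x k * x k ^ 3 + v * (x k * y k) := by
    rw [← huv]; ring
  rw [this, x_mul_y, mul_zero, add_zero]

lemma not_boundary (m : M k) (h1 : y k • m = 0) (h2 : x k ^ 2 • m = (J k).mkQ (x k ^ 2)) :
    False := by
  obtain ⟨m', rfl⟩ := Submodule.mkQ_surjective (J k) m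
  rw [← map_smul, smul_eq_mul, Submodule.mkQ_apply, Submodule.Quotient.mk_eq_zero, J,
    Ideal.mem_span_singleton'] at h1
  obtain ⟨t, ht⟩ := h1
  have hz : (t * x k ^ 2) * x k = m' * y k := by
    rw [show (t * x k ^ 2) * x k = t * x k ^ 3 by ring, ht]
    ring
  have h0 := (zx_eq_zero_of_zx_eq_wy hz).2
  have := mem_span_x_of_mul_y_eq_zero h0
  rw [Ideal.mem_span_singleton'] at this
  obtain ⟨s, hs⟩ := this
  rw [← map_smul, smul_eq_mul] at h2
  have : x k ^ 2 * m' = s * x k ^ 3 := by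
    rw [← hs]; ring
  rw [this] at h2
  have hzero : (J k).mkQ (s * x k ^ 3) = 0 := by
    rw [Submodule.mkQ_apply, Submodule.Quotient.mk_eq_zero, J, Ideal.mem_span_singleton']
    exact ⟨s, rfl⟩
  rw [hzero] at h2
  apply x_sq_not_mem (k := k)
  rw [← Submodule.Quotient.mk_eq_zero, ← Submodule.mkQ_apply]
  exact h2.symm

def HomCplx : CochainComplex (ModuleCat (R k)) ℕ :=
  ChainComplex.linearYonedaObj (Cplx k) (R k) (Mmod k)

def S : CategoryTheory.ShortComplex (ModuleCat (R k)) := (HomCplx k).sc' 1 2 3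

def xilin : (R k × R k) →ₗ[R k] M k :=
  (J k).mkQ.comp ((LinearMap.lsmul (R k) (R k) (x k)).comp
    (LinearMap.fst (R k) (R k) (R k)))

lemma xilin_apply (a b : R k) : xilin k (a, b) = (J k).mkQ (x k * a) := rfl

lemma d23_apply (φ : (HomCplx k).X 2) : ((HomCplx k).d 2 3) φ = (Cplx k).d 3 2 ≫ φ := by
  simp [HomCplx, ChainComplex.linearYonedaObj_d]
  rfl

lemma d12_apply (φ : (HomCplx k).X 1) : ((HomCplx k).d 1 2) φ = (Cplx k).d 2 1 ≫ φ := by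
  simp [HomCplx, ChainComplex.linearYonedaObj_d]
  rfl

set_option maxHeartbeats 1000000 in
lemma xilin_cocycle : (S k).g (ModuleCat.ofHom (xilin k)) = 0 := by
  show ((HomCplx k).d 2 3) (ModuleCat.ofHom (xilin k)) = 0
  erw [d23_apply, Cplx_d_eq]
  refine ModuleCat.hom_ext <| LinearMap.ext fun z => ?_
  show xilin k ((K k).subtype (pi0 k z)) = 0
  generalize pi0 k z = w
  obtain ⟨⟨a, b⟩, hab⟩ := w
  show xilin k (a, b) = 0
  rw [xilin_apply]
  exact xi_vanish k a b hab

def cyc : LinearMap.ker ((S k).g.hom) := ⟨show ((S k).X₂ : Type) from ModuleCat.ofHom (xilin k), xilin_cocycle k⟩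

lemma iso_smul_ne_zero {A B : ModuleCat (R k)} (i : A ≅ B) (r : R k) (b : B)
    (hb : r • b ≠ 0) : r • (i.inv b) ≠ 0 := by
  intro h
  apply hb
  have := congrArg i.hom h
  rw [map_smul, map_zero] at this
  rwa [show i.hom (i.inv b) = b from i.inv_hom_id_apply b] at this

set_option maxHeartbeats 1000000 in
lemma class_ne_zero :
    x k • (Submodule.Quotient.mk (cyc k) :
      LinearMap.ker ((S k).g.hom) ⧸ LinearMap.range ((S k).moduleCatToCycles)) ≠ 0 := by
  intro h
  rw [← Submodule.Quotient.mk_smul, Submodule.Quotient.mk_eq_zero] at h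
  obtain ⟨η, hη⟩ := h
  have hval : ((HomCplx k).d 1 2) η = x k • ModuleCat.ofHom (xilin k) := by
    have h0 := congrArg Subtype.val hη
    exact h0
  erw [d12_apply, Cplx_d_eq] at hval
  let ηm : (R k) →ₗ[R k] M k := η.hom
  have hval2 : ηm.comp (d2lin k) = x k • xilin k := congrArg ModuleCat.Hom.hom hval
  have h10 := DFunLike.congr_fun hval2 (1, 0)
  have h01 := DFunLike.congr_fun hval2 (0, 1)
  rw [LinearMap.comp_apply, d2lin_apply, LinearMap.smul_apply, xilin_apply] at h10 h01
  set m : M k := ηm 1 with hm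
  have hy : y k • m = 0 := by
    rw [mul_zero, mul_one, zero_add, mul_zero, map_zero, smul_zero] at h01
    calc y k • m = ηm (y k • (1 : R k)) := (map_smul _ _ _).symm
    _ = ηm (y k) := by rw [smul_eq_mul, mul_one]
    _ = 0 := h01
  have hx : x k ^ 2 • m = (J k).mkQ (x k ^ 2) := by
    rw [mul_one, mul_zero, add_zero, mul_one] at h10
    have hsm : x k • (J k).mkQ (x k) = (J k).mkQ (x k ^ 2) := by
      rw [Submodule.mkQ_apply, Submodule.mkQ_apply, ← Submodule.Quotient.mk_smul,
        smul_eq_mul, ← pow_two]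
    calc x k ^ 2 • m = ηm (x k ^ 2 • (1 : R k)) := (map_smul _ _ _).symm
    _ = ηm (x k ^ 2) := by rw [smul_eq_mul, mul_one]
    _ = x k • (J k).mkQ (x k) := h10
    _ = (J k).mkQ (x k ^ 2) := hsm
  exact not_boundary k m hy hx

set_option maxHeartbeats 1000000 in
theorem main : ∃ e : ((Ext (R k) (ModuleCat (R k)) 2).obj
    (Opposite.op (ModuleCat.of (R k) (M k)))).obj (ModuleCat.of (R k) (M k)),
    x k • e ≠ 0 := by
  have i1 := (res k).isoExt (R := R k) 2 (Mmod k)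
  have i2 : (HomCplx k).homology 2 ≅ (S k).homology :=
    HomologicalComplex.homologyIsoSc' (HomCplx k) 1 2 3 (by simp) (by simp)
  have i3 := (S k).moduleCatHomologyIso
  refine ⟨i1.inv (i2.inv (i3.inv (Submodule.Quotient.mk (cyc k)))), ?_⟩
  apply iso_smul_ne_zero
  apply iso_smul_ne_zero
  apply iso_smul_ne_zero
  exact class_ne_zero k

end

end Stmt7

open CategoryTheory in
/-- for `R = k[[x,y]]/(x⁵, xy)` and `M = R/x³R`, multiplication by `x` on
`Ext²_R(M, M)` is nonzero. -/
theorem stmt7 (k : Type) [Field k] :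
    letI P := MvPowerSeries (Fin 2) k
    letI X : P := MvPowerSeries.X 0
    letI Y : P := MvPowerSeries.X 1
    letI I : Ideal P := Ideal.span {X ^ 5, X * Y}
    letI R := P ⧸ I
    letI x : R := Ideal.Quotient.mk I X
    letI M := R ⧸ Ideal.span {x ^ 3}
    ∃ e : ((Ext R (ModuleCat R) 2).obj (Opposite.op (ModuleCat.of R M))).obj
      (ModuleCat.of R M), x • e ≠ 0 := by
  exact Stmt7.main k
end

section
/- Let R = k[[x,y]]/(x⁵, xy) over a field k and M = R/x³R. Then y·Ext²_R(M, M) = 0. -/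
open CategoryTheory

open CategoryTheory Limits

noncomputable section

/-- If `r • 𝟙 A` factors through a projective object, then `r` kills `Ext² (A, B)`. -/
lemma aux_ext_smul_zero {R : Type} [CommRing R] (A B Q : ModuleCat.{0} R) [Projective Q]
    (f : A ⟶ Q) (g : Q ⟶ A) (r : R) (hfg : ∀ a : A, g (f a) = r • a)
    (e : ((Ext R (ModuleCat.{0} R) 2).obj (Opposite.op A)).obj B) : r • e = 0 := by
  classical
  letI P : ProjectiveResolution A := ProjectiveResolution.of A
  letI K := P.complex.linearYonedaObj R B
  letI iso := P.isoExt (R := R) 2 B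
  -- the two lifts of μ := f ≫ g
  letI μ : A ⟶ A := f ≫ g
  letI Ψ : P.complex ⟶ P.complex :=
    { f := fun i => r • 𝟙 _
      comm' := by intro i j _; simp }
  haveI : Epi (P.π.f 0) := epi_of_isColimit_cofork P.isColimitCokernelCofork
  letI g₀ : Q ⟶ P.complex.X 0 := @Projective.factorThru _ _ _ _ _ _ g (P.π.f 0) this
  letI Φ : P.complex ⟶ P.complex :=
    { f := fun i => match i with
        | 0 => P.π.f 0 ≫ f ≫ g₀
        | _+1 => 0
      comm' := by
        rintro i j (rfl : j + 1 = i)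
        match j with
        | 0 =>
          have h10 : P.complex.d 1 0 ≫ P.π.f 0 = 0 := by
            have := P.π.comm 1 0
            exact P.complex_d_comp_π_f_zero
          show 0 ≫ P.complex.d 1 0 = P.complex.d 1 0 ≫ (P.π.f 0 ≫ f ≫ g₀)
          rw [Limits.zero_comp, ← Category.assoc, h10]
          exact Limits.zero_comp.symm
        | j+1 => simp }
  have wΨ : Ψ ≫ P.π = P.π ≫ (ChainComplex.single₀ (ModuleCat R)).map μ := by
    apply HomologicalComplex.to_single_hom_ext
    show Ψ.f 0 ≫ P.π.f 0 = P.π.f 0 ≫ ((ChainComplex.single₀ (ModuleCat R)).map μ).f 0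
    rw [ChainComplex.single₀_map_f_zero]
    apply ModuleCat.hom_ext
    apply LinearMap.ext
    intro a
    show P.π.f 0 (r • a) = g (f (P.π.f 0 a))
    exact ((P.π.f 0).hom.map_smul r a).trans (hfg _).symm
  have wΦ : Φ ≫ P.π = P.π ≫ (ChainComplex.single₀ (ModuleCat R)).map μ := by
    apply HomologicalComplex.to_single_hom_ext
    show (P.π.f 0 ≫ f ≫ g₀) ≫ P.π.f 0 = P.π.f 0 ≫ ((ChainComplex.single₀ (ModuleCat R)).map μ).f 0
    rw [ChainComplex.single₀_map_f_zero]
    simp only [Category.assoc]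
    exact congrArg (fun t => P.π.f 0 ≫ f ≫ t) (@Projective.factorThru_comp _ _ _ _ _ _ g (P.π.f 0) this)
  letI H : Homotopy Ψ Φ := ProjectiveResolution.liftHomotopy μ Ψ Φ wΨ wΦ
  -- reduce to homology
  suffices hz : ∀ z : (K.homology 2), r • z = 0 by
    have h1 : iso.hom (r • e) = 0 := by
      rw [map_smul]; exact hz _
    have h2 : iso.inv (iso.hom (r • e)) = r • e := iso.hom_inv_id_apply _
    rw [← h2, h1, map_zero]
  intro z
  letI S := K.sc' 1 2 3
  letI iso2 : K.homology 2 ≅ S.moduleCatLeftHomologyData.H :=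
    (K.homologyIsoSc' 1 2 3 (by simp) (by simp)) ≪≫ S.moduleCatHomologyIso
  suffices h3 : iso2.hom (r • z) = 0 by
    have h2 : iso2.inv (iso2.hom (r • z)) = r • z := iso2.hom_inv_id_apply _
    rw [← h2, h3, map_zero]
  rw [map_smul]
  obtain ⟨c, hc⟩ := Submodule.mkQ_surjective _ (iso2.hom z)
  rw [← hc]
  have hq : r • (LinearMap.range S.moduleCatToCycles).mkQ c
      = (LinearMap.range S.moduleCatToCycles).mkQ (r • c) :=
    ((LinearMap.range S.moduleCatToCycles).mkQ.map_smul r c).symm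
  change r • ((LinearMap.range S.moduleCatToCycles).mkQ c) =
    (0 : LinearMap.ker S.g.hom ⧸ LinearMap.range S.moduleCatToCycles)
  rw [hq, Submodule.mkQ_apply, Submodule.Quotient.mk_eq_zero]
  -- exhibit the boundary
  letI cv : P.complex.X 2 ⟶ B := c.1
  refine ⟨H.hom 1 2 ≫ cv, ?_⟩
  apply Subtype.ext
  show S.f (H.hom 1 2 ≫ cv) = (r • c).1
  have hcomm := H.comm 2
  rw [dNext_eq H.hom (show (ComplexShape.down ℕ).Rel 2 1 by simp),
    prevD_eq H.hom (show (ComplexShape.down ℕ).Rel 3 2 by simp)] at hcomm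
  have hΦ2 : Φ.f 2 = 0 := rfl
  have hcyc : P.complex.d 3 2 ≫ cv = 0 := c.2
  have hsmul : Ψ.f 2 ≫ cv = r • cv := by
    apply ModuleCat.hom_ext
    apply LinearMap.ext
    intro m
    show cv (r • m) = r • cv m
    exact cv.hom.map_smul r m
  have key : P.complex.d 2 1 ≫ (H.hom 1 2 ≫ cv) = r • cv := by
    rw [← hsmul, hcomm, hΦ2]
    simp only [Preadditive.add_comp, Category.assoc, hcyc, Limits.comp_zero,
      Limits.zero_comp, add_zero]
  show S.f (H.hom 1 2 ≫ cv) = r • cv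
  exact key

/-- Specialization: if `y * x³ = 0` in a commutative ring `R`, then `y` kills
`Ext²(R/(x³), R/(x³))`. -/
lemma aux2_ext (R : Type) [CommRing R] (x y : R) (h : y * x ^ 3 = 0) :
    ∀ e : ((Ext R (ModuleCat R) 2).obj
        (Opposite.op (ModuleCat.of R (R ⧸ Ideal.span {x ^ 3})))).obj
      (ModuleCat.of R (R ⧸ Ideal.span {x ^ 3})), y • e = 0 := by
  intro e
  letI J : Ideal R := Ideal.span {x ^ 3}
  haveI : Projective (ModuleCat.of R R) :=
    ModuleCat.projective_of_free (Module.Basis.singleton PUnit.{1} R)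
  have hle : J ≤ LinearMap.ker (LinearMap.lsmul R R y) := by
    rintro t ht
    rw [Ideal.mem_span_singleton] at ht
    obtain ⟨c, rfl⟩ := ht
    simp only [LinearMap.mem_ker, LinearMap.lsmul_apply, smul_eq_mul]
    rw [← mul_assoc, h, zero_mul]
  letI f : ModuleCat.of R (R ⧸ J) ⟶ ModuleCat.of R R :=
    ModuleCat.ofHom (Submodule.liftQ J (LinearMap.lsmul R R y) hle)
  letI g : ModuleCat.of R R ⟶ ModuleCat.of R (R ⧸ J) := ModuleCat.ofHom J.mkQ
  refine aux_ext_smul_zero _ _ _ f g y ?_ e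
  intro a
  obtain ⟨b, rfl⟩ := Submodule.mkQ_surjective J a
  show J.mkQ (Submodule.liftQ J (LinearMap.lsmul R R y) hle (J.mkQ b)) = y • J.mkQ b
  simp only [Submodule.mkQ_apply]
  rw [Submodule.liftQ_apply]
  show J.mkQ (y • b) = y • J.mkQ b
  rw [map_smul]

end

/-- for `R = k[[x,y]]/(x⁵, xy)` and `M = R/x³R`, multiplication by `y`
annihilates `Ext²_R(M, M)`. -/
theorem stmt8 (k : Type) [Field k] :
    letI P := MvPowerSeries (Fin 2) k
    letI X : P := MvPowerSeries.X 0
    letI Y : P := MvPowerSeries.X 1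
    letI I : Ideal P := Ideal.span {X ^ 5, X * Y}
    letI R := P ⧸ I
    letI x : R := Ideal.Quotient.mk I X
    letI y : R := Ideal.Quotient.mk I Y
    letI M := R ⧸ Ideal.span {x ^ 3}
    ∀ e : ((Ext R (ModuleCat R) 2).obj (Opposite.op (ModuleCat.of R M))).obj
      (ModuleCat.of R M), y • e = 0 := by
  intro e
  refine aux2_ext _ (Ideal.Quotient.mk _ (MvPowerSeries.X 0))
    (Ideal.Quotient.mk _ (MvPowerSeries.X 1)) ?_ e
  rw [← map_pow, ← map_mul, Ideal.Quotient.eq_zero_iff_mem]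
  have : (MvPowerSeries.X 1 : MvPowerSeries (Fin 2) k) * MvPowerSeries.X 0 ^ 3 =
      (MvPowerSeries.X 0 * MvPowerSeries.X 1) * MvPowerSeries.X 0 ^ 2 := by ring
  rw [this]
  exact Ideal.mul_mem_right _ _ (Ideal.subset_span (by simp))
end

section
/- Let R = ℂ[[x,y,z]]/(xy, x(x⁴−z⁴)) and I = (x³, z)R. Then I² = zI, and I/I² is isomorphic as an R/I-module to the direct sum (R/I) ⊕ R/(I + (x², y)). -/
namespace Stmt18aux
open MvPowerSeries Finsupp
set_option maxHeartbeats 1000000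
noncomputable section
abbrev PP := MvPowerSeries (Fin 3) ℂ

def shiftv (i : Fin 3) (F : PP) : PP := fun m => F (m + Finsupp.single i 1)
def restv (i : Fin 3) (F : PP) : PP := fun m => if m i = 0 then F m else 0

lemma coeff_X_mul' (i : Fin 3) (G : PP) (m : Fin 3 →₀ ℕ) :
    coeff m (X i * G) = if Finsupp.single i 1 ≤ m then coeff (m - Finsupp.single i 1) G else 0 := by
  rw [show (X i : PP) = monomial (Finsupp.single i 1) 1 from rfl, coeff_monomial_mul, one_mul]

lemma decompv (i : Fin 3) (F : PP) : F = X i * shiftv i F + restv i F := by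
  ext m
  rw [map_add, coeff_X_mul']
  by_cases h : Finsupp.single i 1 ≤ m
  · rw [if_pos h]
    have hmi : m i ≠ 0 := by
      have := Finsupp.le_def.mp h i
      simp at this; omega
    have : coeff m (restv i F) = 0 := by simp [restv, coeff_apply, hmi]
    rw [this, add_zero, coeff_apply, coeff_apply, shiftv, tsub_add_cancel_of_le h]
  · rw [if_neg h, zero_add]
    have hmi : m i = 0 := by
      by_contra hc
      exact h (Finsupp.single_le_iff.mpr (by omega))
    simp [restv, coeff_apply, hmi]

lemma eq_X_mul_shiftv (i : Fin 3) (F : PP) (h : restv i F = 0) : F = X i * shiftv i F := by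
  conv_lhs => rw [decompv i F]
  rw [h, add_zero]

lemma fin3_eq_zero (m : Fin 3 →₀ ℕ) (h0 : m 0 = 0) (h1 : m 1 = 0) (h2 : m 2 = 0) : m = 0 := by
  ext j; fin_cases j <;> simpa

lemma memB (B : PP) (h0 : (coeff 0) B = 0) (h1 : (coeff (Finsupp.single 0 1)) B = 0) :
    B ∈ Ideal.span {(X 0 : PP) ^ 2, X 1, X 2} := by
  set B' := restv 2 B with hB'def
  set B2 := restv 1 B' with hB2def
  have hB2eq : ∀ m : Fin 3 →₀ ℕ, B2 m = if m 1 = 0 ∧ m 2 = 0 then B m else 0 := by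
    intro m
    by_cases hm1 : m 1 = 0 <;> by_cases hm2 : m 2 = 0 <;>
      simp [hB2def, hB'def, restv, hm1, hm2]
  have hr0 : restv 0 B2 = 0 := by
    funext m
    show (if m 0 = 0 then B2 m else 0) = 0
    split_ifs with hm0
    · rw [hB2eq]
      split_ifs with hmm
      · rw [fin3_eq_zero m hm0 hmm.1 hmm.2]; exact h0
      · rfl
    · rfl
  have hrC : restv 0 (shiftv 0 B2) = 0 := by
    funext m
    show (if m 0 = 0 then shiftv 0 B2 m else 0) = 0
    split_ifs with hm0
    · show B2 (m + Finsupp.single 0 1) = 0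
      rw [hB2eq]
      have e1 : (m + Finsupp.single 0 1 : Fin 3 →₀ ℕ) 1 = m 1 := by simp [Finsupp.single_apply]
      have e2 : (m + Finsupp.single 0 1 : Fin 3 →₀ ℕ) 2 = m 2 := by simp [Finsupp.single_apply]
      rw [e1, e2]
      split_ifs with hmm
      · rw [fin3_eq_zero m hm0 hmm.1 hmm.2, zero_add]; exact h1
      · rfl
    · rfl
  have hB2 : B2 = X 0 ^ 2 * shiftv 0 (shiftv 0 B2) := by
    have hC1 := eq_X_mul_shiftv 0 B2 hr0
    have hC2 := eq_X_mul_shiftv 0 (shiftv 0 B2) hrC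
    linear_combination hC1 + X 0 * hC2
  have hd1 : B = X 2 * shiftv 2 B + B' := decompv 2 B
  have hd2 : B' = X 1 * shiftv 1 B' + B2 := decompv 1 B'
  rw [hd1, hd2, hB2]
  refine add_mem (Ideal.mul_mem_right _ _ (Ideal.subset_span (by simp)))
    (add_mem (Ideal.mul_mem_right _ _ (Ideal.subset_span (by simp)))
      (Ideal.mul_mem_right _ _ (Ideal.subset_span (by simp))))

lemma memA (A : PP) (hY : ∀ j : ℕ, (coeff (Finsupp.single 1 j)) A = 0)
    (h1 : (coeff (Finsupp.single 0 1)) A = 0)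
    (h2 : (coeff (Finsupp.single 0 2)) A = 0) :
    A ∈ Ideal.span {(X 0 : PP) ^ 3, X 2, X 0 * X 1} := by
  set A' := restv 2 A with hA'def
  have hA'eq : ∀ m : Fin 3 →₀ ℕ, A' m = if m 2 = 0 then A m else 0 := fun m => rfl
  -- rest₀ A' = 0 : supported monomials with x-exp 0, z-exp 0 are pure Y powers
  have hr0 : restv 0 A' = 0 := by
    funext m
    show (if m 0 = 0 then A' m else 0) = 0
    split_ifs with hm0
    · rw [hA'eq]
      split_ifs with hm2
      · have hm : m = Finsupp.single 1 (m 1) := by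
          ext j; fin_cases j <;> simp [Finsupp.single_apply, hm0, hm2]
        rw [hm]; exact hY (m 1)
      · rfl
    · rfl
  have hA'1 : A' = X 0 * shiftv 0 A' := eq_X_mul_shiftv 0 A' hr0
  set h := shiftv 0 A' with hhdef
  set E := restv 1 h with hEdef
  have hEeq : ∀ m : Fin 3 →₀ ℕ, E m =
      if m 1 = 0 ∧ m 2 = 0 then A (m + Finsupp.single 0 1) else 0 := by
    intro m
    show (if m 1 = 0 then h m else 0) = _
    have : h m = A' (m + Finsupp.single 0 1) := rfl
    rw [this, hA'eq]
    have e2 : (m + Finsupp.single 0 1 : Fin 3 →₀ ℕ) 2 = m 2 := by simp [Finsupp.single_apply]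
    rw [e2]
    by_cases hm1 : m 1 = 0 <;> by_cases hm2 : m 2 = 0 <;> simp [hm1, hm2]
  have hrE : restv 0 E = 0 := by
    funext m
    show (if m 0 = 0 then E m else 0) = 0
    split_ifs with hm0
    · rw [hEeq]
      split_ifs with hmm
      · rw [fin3_eq_zero m hm0 hmm.1 hmm.2, zero_add]; exact h1
      · rfl
    · rfl
  have hrE' : restv 0 (shiftv 0 E) = 0 := by
    funext m
    show (if m 0 = 0 then shiftv 0 E m else 0) = 0
    split_ifs with hm0
    · show E (m + Finsupp.single 0 1) = 0
      rw [hEeq]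
      have e1 : (m + Finsupp.single 0 1 : Fin 3 →₀ ℕ) 1 = m 1 := by simp [Finsupp.single_apply]
      have e2 : (m + Finsupp.single 0 1 : Fin 3 →₀ ℕ) 2 = m 2 := by simp [Finsupp.single_apply]
      rw [e1, e2]
      split_ifs with hmm
      · rw [fin3_eq_zero m hm0 hmm.1 hmm.2, zero_add]
        have hs : Finsupp.single (0 : Fin 3) 1 + Finsupp.single 0 1 = Finsupp.single 0 2 := by
          rw [← Finsupp.single_add]
        rw [hs]; exact h2
      · rfl
    · rfl
  have hE2 : E = X 0 ^ 2 * shiftv 0 (shiftv 0 E) := by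
    have hC1 := eq_X_mul_shiftv 0 E hrE
    have hC2 := eq_X_mul_shiftv 0 (shiftv 0 E) hrE'
    linear_combination hC1 + X 0 * hC2
  have hd2 : h = X 1 * shiftv 1 h + E := decompv 1 h
  have hd1 : A = X 2 * shiftv 2 A + A' := decompv 2 A
  have hfinal : A = X 2 * shiftv 2 A + ((X 0 * X 1) * shiftv 1 h
      + X 0 ^ 3 * shiftv 0 (shiftv 0 E)) := by
    linear_combination hd1 + hA'1 + X 0 * hd2 + X 0 * hE2
  rw [hfinal]
  refine add_mem (Ideal.mul_mem_right _ _ (Ideal.subset_span (by simp)))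
    (add_mem (Ideal.mul_mem_right _ _ (Ideal.subset_span (by simp)))
      (Ideal.mul_mem_right _ _ (Ideal.subset_span (by simp))))

lemma nle (n m : Fin 3 →₀ ℕ) (i : Fin 3) (h : m i < n i) : ¬ n ≤ m :=
  fun hle => absurd (Finsupp.le_def.mp hle i) (not_le.mpr h)

lemma coeff_mm_nle {c : PP} {n m : Fin 3 →₀ ℕ} (h : ¬ n ≤ m) :
    coeff m (c * monomial n 1) = 0 := by rw [coeff_mul_monomial, if_neg h]

lemma coeff_mm_self {c : PP} {n : Fin 3 →₀ ℕ} :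
    coeff n (c * monomial n 1) = coeff 0 c := by
  rw [coeff_mul_monomial, if_pos le_rfl, tsub_self, mul_one]

lemma coeff_mm_add {c : PP} {k n : Fin 3 →₀ ℕ} :
    coeff (k + n) (c * monomial n 1) = coeff k c := by
  rw [coeff_add_mul_monomial, mul_one]

lemma coeff_bundle (A B c1 c2 c3 c4 c5 : PP)
    (heq : A * monomial (Finsupp.single 2 1) 1 + B * monomial (Finsupp.single 0 3) 1 =
      c1 * monomial (Finsupp.single 0 6) 1 +
      c2 * monomial (Finsupp.single 0 3 + Finsupp.single 2 1) 1 +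
      c3 * monomial (Finsupp.single 2 2) 1 +
      c4 * monomial (Finsupp.single 0 1 + Finsupp.single 1 1) 1 +
      (c5 * monomial (Finsupp.single 0 5) 1 -
       c5 * monomial (Finsupp.single 0 1 + Finsupp.single 2 4) 1)) :
    ((coeff 0) B = 0 ∧ (coeff (Finsupp.single 0 1)) B = 0) ∧
    ((∀ j : ℕ, (coeff (Finsupp.single 1 j)) A = 0) ∧
     (coeff (Finsupp.single 0 1)) A = 0 ∧ (coeff (Finsupp.single 0 2)) A = 0) := by
  refine ⟨⟨?_, ?_⟩, ?_, ?_, ?_⟩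
  · have h := congrArg (coeff (Finsupp.single 0 3)) heq
    simpa [coeff_mm_self,
      coeff_mm_nle (nle (Finsupp.single 2 1) (Finsupp.single 0 3) 2 (by simp [Finsupp.single_apply])),
      coeff_mm_nle (nle (Finsupp.single 0 6) (Finsupp.single 0 3) 0 (by simp [Finsupp.single_apply])),
      coeff_mm_nle (nle (Finsupp.single 0 3 + Finsupp.single 2 1) (Finsupp.single 0 3) 2 (by simp [Finsupp.single_apply])),
      coeff_mm_nle (nle (Finsupp.single 2 2) (Finsupp.single 0 3) 2 (by simp [Finsupp.single_apply])),
      coeff_mm_nle (nle (Finsupp.single 0 1 + Finsupp.single 1 1) (Finsupp.single 0 3) 1 (by simp [Finsupp.single_apply])),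
      coeff_mm_nle (nle (Finsupp.single 0 5) (Finsupp.single 0 3) 0 (by simp [Finsupp.single_apply])),
      coeff_mm_nle (nle (Finsupp.single 0 1 + Finsupp.single 2 4) (Finsupp.single 0 3) 2 (by simp [Finsupp.single_apply]))] using h
  · have h := congrArg (coeff (Finsupp.single 0 1 + Finsupp.single 0 3)) heq
    simpa [coeff_mm_add,
      coeff_mm_nle (nle (Finsupp.single 2 1) (Finsupp.single 0 1 + Finsupp.single 0 3) 2 (by simp [Finsupp.single_apply])),
      coeff_mm_nle (nle (Finsupp.single 0 6) (Finsupp.single 0 1 + Finsupp.single 0 3) 0 (by simp [Finsupp.single_apply])),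
      coeff_mm_nle (nle (Finsupp.single 0 3 + Finsupp.single 2 1) (Finsupp.single 0 1 + Finsupp.single 0 3) 2 (by simp [Finsupp.single_apply])),
      coeff_mm_nle (nle (Finsupp.single 2 2) (Finsupp.single 0 1 + Finsupp.single 0 3) 2 (by simp [Finsupp.single_apply])),
      coeff_mm_nle (nle (Finsupp.single 0 1 + Finsupp.single 1 1) (Finsupp.single 0 1 + Finsupp.single 0 3) 1 (by simp [Finsupp.single_apply])),
      coeff_mm_nle (nle (Finsupp.single 0 5) (Finsupp.single 0 1 + Finsupp.single 0 3) 0 (by simp [Finsupp.single_apply])),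
      coeff_mm_nle (nle (Finsupp.single 0 1 + Finsupp.single 2 4) (Finsupp.single 0 1 + Finsupp.single 0 3) 2 (by simp [Finsupp.single_apply]))] using h
  · intro j
    have h := congrArg (coeff (Finsupp.single 1 j + Finsupp.single 2 1)) heq
    simpa [coeff_mm_add,
      coeff_mm_nle (nle (Finsupp.single 0 3) (Finsupp.single 1 j + Finsupp.single 2 1) 0 (by simp [Finsupp.single_apply])),
      coeff_mm_nle (nle (Finsupp.single 0 6) (Finsupp.single 1 j + Finsupp.single 2 1) 0 (by simp [Finsupp.single_apply])),
      coeff_mm_nle (nle (Finsupp.single 0 3 + Finsupp.single 2 1) (Finsupp.single 1 j + Finsupp.single 2 1) 0 (by simp [Finsupp.single_apply])),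
      coeff_mm_nle (nle (Finsupp.single 2 2) (Finsupp.single 1 j + Finsupp.single 2 1) 2 (by simp [Finsupp.single_apply])),
      coeff_mm_nle (nle (Finsupp.single 0 1 + Finsupp.single 1 1) (Finsupp.single 1 j + Finsupp.single 2 1) 0 (by simp [Finsupp.single_apply])),
      coeff_mm_nle (nle (Finsupp.single 0 5) (Finsupp.single 1 j + Finsupp.single 2 1) 0 (by simp [Finsupp.single_apply])),
      coeff_mm_nle (nle (Finsupp.single 0 1 + Finsupp.single 2 4) (Finsupp.single 1 j + Finsupp.single 2 1) 2 (by simp [Finsupp.single_apply]))] using h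
  · have h := congrArg (coeff (Finsupp.single 0 1 + Finsupp.single 2 1)) heq
    simpa [coeff_mm_add,
      coeff_mm_nle (nle (Finsupp.single 0 3) (Finsupp.single 0 1 + Finsupp.single 2 1) 0 (by simp [Finsupp.single_apply])),
      coeff_mm_nle (nle (Finsupp.single 0 6) (Finsupp.single 0 1 + Finsupp.single 2 1) 0 (by simp [Finsupp.single_apply])),
      coeff_mm_nle (nle (Finsupp.single 0 3 + Finsupp.single 2 1) (Finsupp.single 0 1 + Finsupp.single 2 1) 0 (by simp [Finsupp.single_apply])),
      coeff_mm_nle (nle (Finsupp.single 2 2) (Finsupp.single 0 1 + Finsupp.single 2 1) 2 (by simp [Finsupp.single_apply])),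
      coeff_mm_nle (nle (Finsupp.single 0 1 + Finsupp.single 1 1) (Finsupp.single 0 1 + Finsupp.single 2 1) 1 (by simp [Finsupp.single_apply])),
      coeff_mm_nle (nle (Finsupp.single 0 5) (Finsupp.single 0 1 + Finsupp.single 2 1) 0 (by simp [Finsupp.single_apply])),
      coeff_mm_nle (nle (Finsupp.single 0 1 + Finsupp.single 2 4) (Finsupp.single 0 1 + Finsupp.single 2 1) 2 (by simp [Finsupp.single_apply]))] using h
  · have h := congrArg (coeff (Finsupp.single 0 2 + Finsupp.single 2 1)) heq
    simpa [coeff_mm_add,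
      coeff_mm_nle (nle (Finsupp.single 0 3) (Finsupp.single 0 2 + Finsupp.single 2 1) 0 (by simp [Finsupp.single_apply])),
      coeff_mm_nle (nle (Finsupp.single 0 6) (Finsupp.single 0 2 + Finsupp.single 2 1) 0 (by simp [Finsupp.single_apply])),
      coeff_mm_nle (nle (Finsupp.single 0 3 + Finsupp.single 2 1) (Finsupp.single 0 2 + Finsupp.single 2 1) 0 (by simp [Finsupp.single_apply])),
      coeff_mm_nle (nle (Finsupp.single 2 2) (Finsupp.single 0 2 + Finsupp.single 2 1) 2 (by simp [Finsupp.single_apply])),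
      coeff_mm_nle (nle (Finsupp.single 0 1 + Finsupp.single 1 1) (Finsupp.single 0 2 + Finsupp.single 2 1) 1 (by simp [Finsupp.single_apply])),
      coeff_mm_nle (nle (Finsupp.single 0 5) (Finsupp.single 0 2 + Finsupp.single 2 1) 0 (by simp [Finsupp.single_apply])),
      coeff_mm_nle (nle (Finsupp.single 0 1 + Finsupp.single 2 4) (Finsupp.single 0 2 + Finsupp.single 2 1) 2 (by simp [Finsupp.single_apply]))] using h

lemma upstairs (A B : PP)
    (h : A * X 2 + B * X 0 ^ 3 ∈
      Ideal.span {(X 0 : PP) ^ 3, X 2} * Ideal.span {(X 0 : PP) ^ 3, X 2} ⊔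
      Ideal.span {(X 0 : PP) * X 1, X 0 * (X 0 ^ 4 - X 2 ^ 4)}) :
    A ∈ Ideal.span {(X 0 : PP) ^ 3, X 2, X 0 * X 1} ∧
    B ∈ Ideal.span {(X 0 : PP) ^ 2, X 1, X 2} := by
  have hX3 : (X 0 : PP) ^ 3 = monomial (Finsupp.single 0 3) 1 := X_pow_eq 0 3
  have hZ : (X 2 : PP) = monomial (Finsupp.single 2 1) 1 := rfl
  have hM1 : (X 0 : PP) ^ 3 * X 0 ^ 3 = monomial (Finsupp.single 0 6) 1 := by
    rw [← pow_add]; norm_num; exact X_pow_eq 0 6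
  have hM2 : (X 0 : PP) ^ 3 * X 2 = monomial (Finsupp.single 0 3 + Finsupp.single 2 1) 1 := by
    rw [hX3, hZ, monomial_mul_monomial, one_mul]
  have hM3 : (X 2 : PP) * X 2 = monomial (Finsupp.single 2 2) 1 := by
    rw [hZ, monomial_mul_monomial, one_mul, ← Finsupp.single_add]
  have hM4 : (X 0 : PP) * X 1 = monomial (Finsupp.single 0 1 + Finsupp.single 1 1) 1 := by
    rw [show (X 0 : PP) = monomial (Finsupp.single 0 1) 1 from rfl,
      show (X 1 : PP) = monomial (Finsupp.single 1 1) 1 from rfl,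
      monomial_mul_monomial, one_mul]
  have hM5 : (X 0 : PP) * (X 0 ^ 4 - X 2 ^ 4) =
      monomial (Finsupp.single 0 5) 1 -
      monomial (Finsupp.single 0 1 + Finsupp.single 2 4) 1 := by
    rw [mul_sub]
    congr 1
    · rw [show (X 0 : PP) * X 0 ^ 4 = X 0 ^ 5 by ring]; exact X_pow_eq 0 5
    · rw [show (X 0 : PP) = monomial (Finsupp.single 0 1) 1 from rfl, X_pow_eq 2 4,
        monomial_mul_monomial, one_mul]
  have hQ : Ideal.span {(X 0 : PP) ^ 3, X 2} * Ideal.span {(X 0 : PP) ^ 3, X 2} ⊔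
      Ideal.span {(X 0 : PP) * X 1, X 0 * (X 0 ^ 4 - X 2 ^ 4)} ≤
      Ideal.span {monomial (Finsupp.single 0 6) 1,
        monomial (Finsupp.single 0 3 + Finsupp.single 2 1) 1,
        monomial (Finsupp.single 2 2) 1,
        monomial (Finsupp.single 0 1 + Finsupp.single 1 1) 1,
        (X 0 : PP) * (X 0 ^ 4 - X 2 ^ 4)} := by
    apply sup_le
    · rw [Ideal.mul_le]
      intro r hr s hs
      obtain ⟨a1, a2, ha⟩ := Ideal.mem_span_pair.mp hr
      obtain ⟨b1, b2, hb⟩ := Ideal.mem_span_pair.mp hs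
      have hrs : r * s = (a1 * b1) * monomial (Finsupp.single 0 6) 1 +
          ((a1 * b2 + a2 * b1) * monomial (Finsupp.single 0 3 + Finsupp.single 2 1) 1 +
           (a2 * b2) * monomial (Finsupp.single 2 2) 1) := by
        rw [← ha, ← hb, ← hM1, ← hM2, ← hM3]; ring
      rw [hrs]
      exact add_mem (Ideal.mul_mem_left _ _ (Ideal.subset_span (by simp)))
        (add_mem (Ideal.mul_mem_left _ _ (Ideal.subset_span (by simp)))
          (Ideal.mul_mem_left _ _ (Ideal.subset_span (by simp))))
    · rw [Ideal.span_le]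
      rintro t ht
      simp only [Set.mem_insert_iff, Set.mem_singleton_iff] at ht
      rcases ht with h' | h'
      · rw [h', hM4]; exact Ideal.subset_span (by simp)
      · rw [h']; exact Ideal.subset_span (by simp)
  have hu := hQ h
  obtain ⟨c1, u1, hu1, e1⟩ := Ideal.mem_span_insert.mp hu
  obtain ⟨c2, u2, hu2, e2⟩ := Ideal.mem_span_insert.mp hu1
  obtain ⟨c3, u3, hu3, e3⟩ := Ideal.mem_span_insert.mp hu2
  obtain ⟨c4, u4, hu4, e4⟩ := Ideal.mem_span_insert.mp hu3
  obtain ⟨c5, e5⟩ := Ideal.mem_span_singleton.mp hu4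
  have heq : A * monomial (Finsupp.single 2 1) 1 + B * monomial (Finsupp.single 0 3) 1 =
      c1 * monomial (Finsupp.single 0 6) 1 +
      c2 * monomial (Finsupp.single 0 3 + Finsupp.single 2 1) 1 +
      c3 * monomial (Finsupp.single 2 2) 1 +
      c4 * monomial (Finsupp.single 0 1 + Finsupp.single 1 1) 1 +
      (c5 * monomial (Finsupp.single 0 5) 1 -
       c5 * monomial (Finsupp.single 0 1 + Finsupp.single 2 4) 1) := by
    linear_combination e1 + e2 + e3 + e4 + e5 - A * hZ - B * hX3 + c5 * hM5
  obtain ⟨hB, hA⟩ := coeff_bundle A B c1 c2 c3 c4 c5 heq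
  exact ⟨memA A hA.1 hA.2.1 hA.2.2, memB B hB.1 hB.2⟩

def Jq : Ideal PP := Ideal.span {(X 0 : PP) * X 1, (X 0 : PP) * ((X 0 : PP) ^ 4 - (X 2 : PP) ^ 4)}
abbrev RR := PP ⧸ Jq
def xx : RR := Ideal.Quotient.mk Jq (X 0)
def yy : RR := Ideal.Quotient.mk Jq (X 1)
def zz : RR := Ideal.Quotient.mk Jq (X 2)
def II : Ideal RR := Ideal.span {xx ^ 3, zz}
def II2 : Ideal RR := II + Ideal.span {xx ^ 2, yy}

lemma hxy : xx * yy = 0 := by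
  rw [show xx * yy = Ideal.Quotient.mk Jq (X 0 * X 1) from (map_mul _ _ _).symm]
  exact Ideal.Quotient.eq_zero_iff_mem.mpr (Ideal.subset_span (by simp))

lemma hx5 : xx ^ 5 = xx * zz ^ 4 := by
  have h0 : Ideal.Quotient.mk Jq ((X 0 : PP) ^ 5 - X 0 * X 2 ^ 4) = 0 := by
    refine Ideal.Quotient.eq_zero_iff_mem.mpr ?_
    rw [show (X 0 : PP) ^ 5 - X 0 * X 2 ^ 4 = X 0 * ((X 0 : PP) ^ 4 - X 2 ^ 4) by ring]
    exact Ideal.subset_span (by simp)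
  rw [map_sub, map_pow, map_mul, map_pow, sub_eq_zero] at h0
  exact h0

lemma hx3mem : xx ^ 3 ∈ II := Ideal.subset_span (by simp)
lemma hzmem : zz ∈ II := Ideal.subset_span (by simp)

lemma part1 : II * II = Ideal.span {zz} * II := by
  apply le_antisymm
  · rw [Ideal.mul_le]
    intro r hr s hs
    have key : ∀ t ∈ II, xx ^ 3 * t ∈ Ideal.span {zz} * II := by
      intro t ht
      refine Submodule.span_induction ?_ ?_ ?_ ?_ ht
      · rintro w hw
        simp only [Set.mem_insert_iff, Set.mem_singleton_iff] at hw
        rcases hw with h' | h' <;> subst h'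
        · have he : xx ^ 3 * xx ^ 3 = zz * (xx ^ 2 * zz ^ 3) := by linear_combination xx * hx5
          rw [he]
          refine Ideal.mul_mem_mul (Ideal.mem_span_singleton_self _) ?_
          rw [show xx ^ 2 * zz ^ 3 = xx ^ 2 * zz ^ 2 * zz by ring]
          exact Ideal.mul_mem_left _ _ hzmem
        · rw [mul_comm (xx ^ 3) zz]
          exact Ideal.mul_mem_mul (Ideal.mem_span_singleton_self _) hx3mem
      · rw [mul_zero]; exact zero_mem _
      · intro u v _ _ hu hv; rw [mul_add]; exact add_mem hu hv
      · intro c u _ hu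
        rw [smul_eq_mul, show xx ^ 3 * (c * u) = c * (xx ^ 3 * u) by ring]
        exact Ideal.mul_mem_left _ _ hu
    refine Submodule.span_induction ?_ ?_ ?_ ?_ hr
    · rintro w hw
      simp only [Set.mem_insert_iff, Set.mem_singleton_iff] at hw
      rcases hw with h' | h' <;> subst h'
      · exact key s hs
      · exact Ideal.mul_mem_mul (Ideal.mem_span_singleton_self _) hs
    · rw [zero_mul]; exact zero_mem _
    · intro u v _ _ hu hv; rw [add_mul]; exact add_mem hu hv
    · intro c u _ hu
      rw [smul_eq_mul, mul_assoc]
      exact Ideal.mul_mem_left _ _ hu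
  · exact Ideal.mul_mono_left (Ideal.span_le.mpr (by simpa using hzmem))

lemma hImap : Ideal.map (Ideal.Quotient.mk Jq) (Ideal.span {(X 0 : PP) ^ 3, X 2}) = II := by
  rw [Ideal.map_span, Set.image_insert_eq, Set.image_singleton, map_pow]
  rfl

lemma hx2mem2 : xx ^ 2 ∈ II2 := by
  rw [II2, Submodule.add_eq_sup]
  exact Submodule.mem_sup_right (Ideal.subset_span (by simp))

lemma hymem2 : yy ∈ II2 := by
  rw [II2, Submodule.add_eq_sup]
  exact Submodule.mem_sup_right (Ideal.subset_span (by simp))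

lemma hzmem2 : zz ∈ II2 := by
  rw [II2, Submodule.add_eq_sup]
  exact Submodule.mem_sup_left hzmem

lemma hx3mem2 : xx ^ 3 ∈ II2 := by
  rw [II2, Submodule.add_eq_sup]
  exact Submodule.mem_sup_left hx3mem

lemma II2span : II2 = Ideal.span {xx ^ 3, zz, xx ^ 2, yy} := by
  apply le_antisymm
  · rw [II2, Submodule.add_eq_sup]
    apply sup_le
    · rw [II, Ideal.span_le]; rintro t ht
      simp only [Set.mem_insert_iff, Set.mem_singleton_iff] at ht
      rcases ht with h | h <;> subst h <;> exact Ideal.subset_span (by simp)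
    · rw [Ideal.span_le]; rintro t ht
      simp only [Set.mem_insert_iff, Set.mem_singleton_iff] at ht
      rcases ht with h | h <;> subst h <;> exact Ideal.subset_span (by simp)
  · rw [Ideal.span_le]; rintro t ht
    simp only [Set.mem_insert_iff, Set.mem_singleton_iff] at ht
    rcases ht with h | h | h | h <;> subst h
    · exact hx3mem2
    · exact hzmem2
    · exact hx2mem2
    · exact hymem2

lemma ker_char (a b : RR) : zz * a + xx ^ 3 * b ∈ II ^ 2 ↔ a ∈ II ∧ b ∈ II2 := by
  constructor
  · intro h
    obtain ⟨A, rfl⟩ := Ideal.Quotient.mk_surjective a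
    obtain ⟨B, rfl⟩ := Ideal.Quotient.mk_surjective b
    have heq : zz * Ideal.Quotient.mk Jq A + xx ^ 3 * Ideal.Quotient.mk Jq B =
        Ideal.Quotient.mk Jq (A * X 2 + B * X 0 ^ 3) := by
      rw [map_add, map_mul, map_mul, map_pow,
        show Ideal.Quotient.mk Jq (X 2) = zz from rfl,
        show Ideal.Quotient.mk Jq (X 0) = xx from rfl]
      ring
    rw [heq, pow_two, ← hImap, ← Ideal.map_mul] at h
    have h' := Ideal.mem_quotient_iff_mem_sup.mp h
    obtain ⟨hA, hB⟩ := upstairs A B h'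
    constructor
    · have hle : Ideal.map (Ideal.Quotient.mk Jq)
          (Ideal.span {(X 0 : PP) ^ 3, X 2, X 0 * X 1}) ≤ II := by
        rw [Ideal.map_span]
        apply Ideal.span_le.mpr
        rintro t ⟨g, hg, rfl⟩
        simp only [Set.mem_insert_iff, Set.mem_singleton_iff] at hg
        rcases hg with h'' | h'' | h'' <;> subst h''
        · rw [map_pow]; exact hx3mem
        · exact hzmem
        · rw [map_mul]
          show xx * yy ∈ II
          rw [hxy]; exact zero_mem _
      exact hle (Ideal.mem_map_of_mem _ hA)
    · have hle : Ideal.map (Ideal.Quotient.mk Jq)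
          (Ideal.span {(X 0 : PP) ^ 2, X 1, X 2}) ≤ II2 := by
        rw [Ideal.map_span]
        apply Ideal.span_le.mpr
        rintro t ⟨g, hg, rfl⟩
        simp only [Set.mem_insert_iff, Set.mem_singleton_iff] at hg
        rcases hg with h'' | h'' | h'' <;> subst h''
        · rw [map_pow]; exact hx2mem2
        · exact hymem2
        · exact hzmem2
      exact hle (Ideal.mem_map_of_mem _ hB)
  · rintro ⟨ha, hb⟩
    refine add_mem ?_ ?_
    · rw [pow_two]; exact Ideal.mul_mem_mul hzmem ha
    · rw [II2span] at hb
      refine Submodule.span_induction ?_ ?_ ?_ ?_ hb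
      · rintro w hw
        simp only [Set.mem_insert_iff, Set.mem_singleton_iff] at hw
        rcases hw with h' | h' | h' | h' <;> subst h'
        · rw [pow_two]; exact Ideal.mul_mem_mul hx3mem hx3mem
        · rw [pow_two]; exact Ideal.mul_mem_mul hx3mem hzmem
        · have he : xx ^ 3 * xx ^ 2 = (xx * zz ^ 3) * zz := by linear_combination hx5
          rw [he, pow_two]
          refine Ideal.mul_mem_mul ?_ hzmem
          rw [show xx * zz ^ 3 = xx * zz ^ 2 * zz by ring]
          exact Ideal.mul_mem_left _ _ hzmem
        · rw [show xx ^ 3 * yy = xx * yy * xx ^ 2 by ring, hxy, zero_mul]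
          exact zero_mem _
      · rw [mul_zero]; exact zero_mem _
      · intro u v _ _ hu hv; rw [mul_add]; exact add_mem hu hv
      · intro c u _ hu
        rw [smul_eq_mul, show xx ^ 3 * (c * u) = c * (xx ^ 3 * u) by ring]
        exact Ideal.mul_mem_left _ _ hu

lemma part2 : Nonempty (II.Cotangent ≃ₗ[RR] ((RR ⧸ II) × (RR ⧸ II2))) := by
  classical
  set f : RR × RR →ₗ[RR] RR :=
    zz • LinearMap.fst RR RR RR + xx ^ 3 • LinearMap.snd RR RR RR with hfdef
  have hfapp : ∀ v : RR × RR, f v = zz * v.1 + xx ^ 3 * v.2 := by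
    intro v; simp [hfdef, smul_eq_mul]
  have hrange : ∀ v, f v ∈ II := by
    intro v
    rw [hfapp]
    exact add_mem (Ideal.mul_mem_right _ _ hzmem) (Ideal.mul_mem_right _ _ hx3mem)
  set ψ : RR × RR →ₗ[RR] II := LinearMap.codRestrict _ f hrange with hψdef
  set φ : RR × RR →ₗ[RR] II.Cotangent := II.toCotangent.comp ψ with hφdef
  have hψcoe : ∀ v, ((ψ v : RR)) = f v := fun v => rfl
  have hφsurj : Function.Surjective φ := by
    intro c
    obtain ⟨w, rfl⟩ := Ideal.toCotangent_surjective II c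
    obtain ⟨p, q, hpq⟩ := Ideal.mem_span_pair.mp w.2
    refine ⟨(q, p), ?_⟩
    show II.toCotangent (ψ (q, p)) = II.toCotangent w
    congr 1
    apply Subtype.ext
    rw [hψcoe, hfapp]
    dsimp only
    linear_combination hpq
  have hker : LinearMap.ker φ = Submodule.prod (II : Submodule RR RR) II2 := by
    ext v
    rw [LinearMap.mem_ker, Submodule.mem_prod]
    show II.toCotangent (ψ v) = 0 ↔ _
    rw [Ideal.toCotangent_eq_zero, show ((ψ v : RR)) = f v from rfl, hfapp]
    exact ker_char v.1 v.2
  set π : RR × RR →ₗ[RR] (RR ⧸ II) × (RR ⧸ II2) :=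
    LinearMap.prodMap (Submodule.mkQ _) (Submodule.mkQ _) with hπdef
  have hπker : LinearMap.ker π = Submodule.prod (II : Submodule RR RR) II2 := by
    rw [hπdef, LinearMap.ker_prodMap, Submodule.ker_mkQ, Submodule.ker_mkQ]
  have hπsurj : Function.Surjective π := by
    rintro ⟨c, d⟩
    obtain ⟨a, rfl⟩ := Submodule.mkQ_surjective _ c
    obtain ⟨b, rfl⟩ := Submodule.mkQ_surjective _ d
    exact ⟨(a, b), rfl⟩
  exact ⟨((φ.quotKerEquivOfSurjective hφsurj).symm.trans
    (Submodule.quotEquivOfEq _ _ (hker.trans hπker.symm))).trans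
    (π.quotKerEquivOfSurjective hπsurj)⟩

end

end Stmt18aux

/-- for `R = ℂ[[x,y,z]]/(xy, x(x⁴−z⁴))` and `I = (x³, z) ⊆ R` one has
`I² = zI`, and `I/I²` is isomorphic to `(R/I) ⊕ R/(I + (x², y))`. -/
theorem stmt18 :
    letI P := MvPowerSeries (Fin 3) ℂ
    letI X : P := MvPowerSeries.X 0
    letI Y : P := MvPowerSeries.X 1
    letI Z : P := MvPowerSeries.X 2
    letI J : Ideal P := Ideal.span {X * Y, X * (X ^ 4 - Z ^ 4)}
    letI R := P ⧸ J
    letI x : R := Ideal.Quotient.mk J X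
    letI y : R := Ideal.Quotient.mk J Y
    letI z : R := Ideal.Quotient.mk J Z
    letI I : Ideal R := Ideal.span {x ^ 3, z}
    I * I = Ideal.span {z} * I ∧
    Nonempty (I.Cotangent ≃ₗ[R] ((R ⧸ I) × (R ⧸ (I + Ideal.span {x ^ 2, y})))) := by
  exact ⟨Stmt18aux.part1, Stmt18aux.part2⟩
end

section
/- Let A be a commutative ring, Λ an A-algebra with multiplication map μ: Λ^e → Λ where Λ^e = Λ⊗_A Λ^op. If the kernel of μ can be generated by n elements as a Λ^e-module, then 𝔫_A(Λ)^n ⊆ 𝔨_A(Λ) ⊆ 𝔫_A(Λ), where 𝔨_A(Λ) = Fitt⁰_Λ(Ω_{Λ/A}) is the Kähler different and 𝔫_A(Λ) the Noether different (with Λ commutative). -/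
open TensorProduct

/-- The `j`-th Fitting ideal of an `R`-module `M`: the ideal generated by the
`(n-j) × (n-j)` minors of relation matrices on generating families of `M`. -/
noncomputable def fittingIdeal (R : Type*) [CommRing R] (j : ℕ)
    (M : Type*) [AddCommGroup M] [Module R M] : Ideal R :=
  Ideal.span {d | ∃ (n : ℕ) (g : Fin (j + n) → M) (B : Matrix (Fin n) (Fin (j + n)) R)
    (c : Fin n → Fin (j + n)), Submodule.span R (Set.range g) = ⊤ ∧
    (∀ i, ∑ l, B i l • g l = 0) ∧ d = (B.submatrix id c).det}

/-- The Noether different of a commutative `A`-algebra `S`: the image under the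
multiplication map `μ : S ⊗[A] S → S` of the annihilator of `ker μ`; this is the image of
`Hom_{S⊗S}(S, S⊗S) → Hom_{S⊗S}(S, S) = S`. -/
noncomputable def noetherDifferent (A S : Type*) [CommRing A] [CommRing S]
    [Algebra A S] : Ideal S :=
  Ideal.map (Algebra.TensorProduct.lmul' A (S := S)).toRingHom
    (Submodule.annihilator
      (RingHom.ker (Algebra.TensorProduct.lmul' A (S := S)).toRingHom))

/-- The Kähler different of a commutative `A`-algebra `S` is the `0`-th Fitting ideal of
the module of Kähler differentials. -/
noncomputable def kaehlerDifferent (A S : Type*) [CommRing A] [CommRing S]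
    [Algebra A S] : Ideal S :=
  fittingIdeal S 0 (Ω[S⁄A])

section Aux

variable {A S : Type} [CommRing A] [CommRing S] [Algebra A S]

local notation "T" => S ⊗[A] S

private noncomputable abbrev mu (A S : Type) [CommRing A] [CommRing S] [Algebra A S] :
    (S ⊗[A] S) →+* S := (Algebra.TensorProduct.lmul' A (S := S)).toRingHom

private noncomputable abbrev Jid (A S : Type) [CommRing A] [CommRing S] [Algebra A S] :
    Ideal (S ⊗[A] S) := RingHom.ker (mu A S)

lemma mu_algebraMap (s : S) : mu A S (algebraMap S T s) = s := by
  show (Algebra.TensorProduct.lmul' A (S := S)) (s ⊗ₜ 1) = s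
  simp

lemma key_smul (z : T) (w : Jid A S) :
    (mu A S z) • ((Jid A S).toCotangent w : Ω[S⁄A]) = (Jid A S).toCotangent (z • w) := by
  have h1 : (mu A S z) • ((Jid A S).toCotangent w : Ω[S⁄A])
      = (algebraMap S T (mu A S z)) • ((Jid A S).toCotangent w) := by
    rw [algebraMap_smul]
  rw [h1, ← map_smul]
  rw [Ideal.toCotangent_eq]
  have : (((algebraMap S T (mu A S z)) • w : Jid A S) : T) - ((z • w : Jid A S) : T)
      = (algebraMap S T (mu A S z) - z) * (w : T) := by
    simp [sub_mul, smul_eq_mul]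
  rw [this, pow_two]
  refine Ideal.mul_mem_mul ?_ w.2
  simp only [RingHom.mem_ker, map_sub, mu_algebraMap, sub_self]

lemma lmul'_algebraMap (s : S) :
    (Algebra.TensorProduct.lmul' A (S := S)) (algebraMap S T s) = s :=
  mu_algebraMap s

lemma lmul'_of_mem {z : T} (h : z ∈ Jid A S) :
    (Algebra.TensorProduct.lmul' A (S := S)) z = 0 :=
  RingHom.mem_ker.mp h

end Aux

section Aux2

variable {A S : Type} [CommRing A] [CommRing S] [Algebra A S]

local notation "T" => S ⊗[A] S

lemma span_cotangent {n : ℕ} (x : Fin n → T) (hx : Ideal.span (Set.range x) = Jid A S)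
    (hxk : ∀ k, x k ∈ Jid A S) :
    Submodule.span S (Set.range fun k => ((Jid A S).toCotangent ⟨x k, hxk k⟩ : Ω[S⁄A])) = ⊤ := by
  rw [Submodule.eq_top_iff']
  intro w
  obtain ⟨w', rfl⟩ := Ideal.toCotangent_surjective (Jid A S) w
  have hw' : (w' : T) ∈ Submodule.span T (Set.range x) := by
    rw [show Submodule.span T (Set.range x) = Ideal.span (Set.range x) from rfl, hx]
    exact w'.2
  obtain ⟨c, hc⟩ := (Submodule.mem_span_range_iff_exists_fun _).mp hw'
  have : w' = ∑ k, c k • (⟨x k, hxk k⟩ : Jid A S) := by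
    ext
    simp only [Submodule.coe_sum, Submodule.coe_smul_of_tower, smul_eq_mul]
    exact hc.symm ▸ rfl
  rw [this, map_sum]
  refine Submodule.sum_mem _ fun k _ => ?_
  rw [← key_smul]
  exact Submodule.smul_mem _ _ (Submodule.subset_span (Set.mem_range_self k))

lemma noether_ann : noetherDifferent A S ≤
    (Submodule.annihilator (⊤ : Submodule S (Ω[S⁄A]))) := by
  rw [noetherDifferent, Ideal.map_le_iff_le_comap]
  intro ξ hξ
  rw [Ideal.mem_comap, Submodule.mem_annihilator]
  intro w _
  obtain ⟨w', rfl⟩ := Ideal.toCotangent_surjective (Jid A S) w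
  refine (key_smul ξ w').trans ?_
  have : (ξ • w' : Jid A S) = 0 := by
    ext
    simpa using Submodule.mem_annihilator.mp hξ _ w'.2
  rw [this, map_zero]
  rfl

end Aux2

section Aux3

variable {A S : Type} [CommRing A] [CommRing S] [Algebra A S]

lemma prod_mem_fitt {n : ℕ} {M : Type} [AddCommGroup M] [Module S M]
    (x : Fin n → M) (hx : Submodule.span S (Set.range x) = ⊤)
    (σ : Fin n → S) (hσ : ∀ i, σ i • x i = 0) :
    (∏ i, σ i) ∈ fittingIdeal S 0 M := by
  apply Ideal.subset_span
  refine ⟨n, x ∘ (finCongr (Nat.zero_add n)),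
    Matrix.of (fun i l => if l = finCongr (Nat.zero_add n).symm i then σ i else 0),
    finCongr (Nat.zero_add n).symm, ?_, ?_, ?_⟩
  · rw [Set.range_comp, Equiv.range_eq_univ, Set.image_univ, hx]
  · intro i
    rw [Fintype.sum_eq_single (finCongr (Nat.zero_add n).symm i)]
    · simp [hσ i]
    · intro l hl
      rw [Matrix.of_apply, if_neg (by simpa using hl), zero_smul]
  · rw [show ((Matrix.of (fun i l => if l = finCongr (Nat.zero_add n).symm i then σ i else 0)).submatrix
        id (finCongr (Nat.zero_add n).symm)) = Matrix.diagonal σ from ?_]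
    · rw [Matrix.det_diagonal]
    · ext i j
      simp only [Matrix.submatrix_apply, id_eq, Matrix.of_apply, Matrix.diagonal_apply]
      by_cases h : i = j
      · simp [h]
      · rw [if_neg (fun hc => h (by simpa using (Equiv.injective _ hc.symm))), if_neg h]

lemma ann_pow_le_fitt {n : ℕ} {M : Type} [AddCommGroup M] [Module S M]
    (x : Fin n → M) (hx : Submodule.span S (Set.range x) = ⊤) :
    (Submodule.annihilator (⊤ : Submodule S M)) ^ n ≤ fittingIdeal S 0 M := by
  set I := Submodule.annihilator (⊤ : Submodule S M)
  rw [Submodule.pow_eq_span_pow_set, Submodule.span_le]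
  rintro a ha
  obtain ⟨f, rfl⟩ := Set.mem_pow.mp ha
  rw [List.prod_ofFn]
  exact prod_mem_fitt x hx _ (fun i => Submodule.mem_annihilator.mp (f i).2 (x i) trivial)

end Aux3

section Aux4

open Matrix in
theorem _dummy : True := trivial

open Matrix

variable {A S : Type} [CommRing A] [CommRing S] [Algebra A S]

local notation "T" => S ⊗[A] S

lemma sq_det_mem_noether {n m : ℕ} (x : Fin n → T)
    (hx : Ideal.span (Set.range x) = Jid A S)
    (g : Fin m → Ω[S⁄A]) (hg : Submodule.span S (Set.range g) = ⊤)
    (B : Matrix (Fin m) (Fin m) S) (hB : ∀ i, ∑ l, B i l • g l = 0) :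
    B.det ∈ noetherDifferent A S := by
  classical
  have hxk : ∀ k, x k ∈ Jid A S := fun k => hx ▸ Ideal.subset_span ⟨k, rfl⟩
  choose y hy using fun l => Ideal.toCotangent_surjective (Jid A S) (g l)
  set ι' : S →+* T := algebraMap S T with hι'
  -- representation of elements of J^2
  have rep : ∀ z : T, z ∈ (Jid A S) ^ 2 →
      ∃ c : Fin n → T, (∀ k, c k ∈ Jid A S) ∧ ∑ k, c k * x k = z := by
    intro z hz
    have hz' : z ∈ (Jid A S) • Submodule.span T (Set.range x) := by
      rw [show Submodule.span T (Set.range x) = Ideal.span (Set.range x) from rfl, hx,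
        Ideal.smul_eq_mul, ← pow_two]
      exact hz
    obtain ⟨a, ha, hsum⟩ := (Submodule.mem_ideal_smul_span_iff_exists_sum _ _ _).mp hz'
    refine ⟨fun k => a k, fun k => ha k, ?_⟩
    rw [← hsum, Finsupp.sum_fintype]
    · rfl
    · intro k; rw [zero_smul]
  -- relation lifts
  have hrelJ2 : ∀ i, ((∑ l, ι' (B i l) • y l : Jid A S) : T) ∈ (Jid A S) ^ 2 := by
    intro i
    rw [← Ideal.toCotangent_eq_zero, map_sum]
    have he : ∀ l, (Jid A S).toCotangent (ι' (B i l) • y l) = B i l • g l := by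
      intro l
      rw [← key_smul, hι', mu_algebraMap, hy]
      rfl
    simp only [he]
    exact hB i
  choose C hC hCsum using fun i => rep _ (hrelJ2 i)
  -- x k in terms of g
  have hxbar : ∀ k, ∃ q : Fin m → S,
      ∑ l, q l • g l = (Jid A S).toCotangent ⟨x k, hxk k⟩ := by
    intro k
    exact (Submodule.mem_span_range_iff_exists_fun _).mp (hg ▸ Submodule.mem_top)
  choose Q hQ using hxbar
  set w : Fin n → Jid A S := fun k => ⟨x k, hxk k⟩ - ∑ l, ι' (Q k l) • y l with hw
  have hwJ2 : ∀ k, ((w k : T)) ∈ (Jid A S) ^ 2 := by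
    intro k
    rw [← Ideal.toCotangent_eq_zero, map_sub, map_sum]
    have he : ∀ l, (Jid A S).toCotangent (ι' (Q k l) • y l) = Q k l • g l := by
      intro l
      rw [← key_smul, hι', mu_algebraMap, hy]
      rfl
    simp only [he]
    exact sub_eq_zero.mpr (hQ k).symm
  choose R hR hRsum using fun k => rep _ (hwJ2 k)
  -- y in terms of x
  have hyx : ∀ l, ∃ p : Fin n → T, ∑ k, p k • x k = (y l : T) := by
    intro l
    refine (Submodule.mem_span_range_iff_exists_fun _).mp ?_
    rw [show Submodule.span T (Set.range x) = Ideal.span (Set.range x) from rfl, hx]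
    exact (y l).2
  choose P hP using hyx
  -- the big matrix
  set N : Matrix (Fin m ⊕ Fin n) (Fin m ⊕ Fin n) T :=
    Matrix.fromBlocks (B.map ι') (Matrix.of fun i k => - C i k)
      (Matrix.of fun k l => - ι' (Q k l)) (1 - Matrix.of (fun k i => R k i)) with hN
  set v : Fin m ⊕ Fin n → T := Sum.elim (fun l => (y l : T)) x with hv
  have coe_sum : ∀ (c : Fin m → T), ((∑ l, c l • y l : Jid A S) : T) = ∑ l, c l * (y l : T) := by
    intro c
    rw [Submodule.coe_sum]
    rfl
  have hNv : N *ᵥ v = 0 := by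
    funext j
    rw [Matrix.mulVec, Pi.zero_apply]
    cases j with
    | inl i =>
      have : (N (Sum.inl i)) ⬝ᵥ v
          = ∑ l, ι' (B i l) * (y l : T) + ∑ k, (- C i k) * x k := by
        simp [hN, hv, dotProduct, Fintype.sum_sum_type]
      rw [this]
      have h1 : ∑ k, C i k * x k = ∑ l, ι' (B i l) * (y l : T) := by
        rw [hCsum i, coe_sum]
      simp only [neg_mul, Finset.sum_neg_distrib, ← h1]
      exact add_neg_cancel _
    | inr k =>
      have : (N (Sum.inr k)) ⬝ᵥ v
          = ∑ l, (- ι' (Q k l)) * (y l : T) + ∑ i, ((1 : Matrix (Fin n) (Fin n) T) k i - R k i) * x i := by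
        simp [hN, hv, dotProduct, Fintype.sum_sum_type, Matrix.sub_apply]
      rw [this]
      have h2 : ∑ i, ((1 : Matrix (Fin n) (Fin n) T) k i - R k i) * x i
          = x k - ∑ i, R k i * x i := by
        simp only [sub_mul, Finset.sum_sub_distrib]
        congr 1
        simp [Matrix.one_apply, ite_mul]
      have h3 : ∑ i, R k i * x i = x k - ∑ l, ι' (Q k l) * (y l : T) := by
        rw [hRsum k, hw]
        simp only [AddSubgroupClass.coe_sub]
        rw [coe_sum]
      rw [h2, h3]
      simp only [neg_mul, Finset.sum_neg_distrib]
      ring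
  have hdet0 : ∀ j, N.det * v j = 0 := by
    intro j
    have h4 : N.det • v = 0 := by
      calc N.det • v = (N.det • (1 : Matrix (Fin m ⊕ Fin n) (Fin m ⊕ Fin n) T)) *ᵥ v := by
            rw [Matrix.smul_mulVec, Matrix.one_mulVec]
        _ = (Matrix.adjugate N * N) *ᵥ v := by rw [Matrix.adjugate_mul]
        _ = Matrix.adjugate N *ᵥ (N *ᵥ v) := by rw [Matrix.mulVec_mulVec]
        _ = 0 := by rw [hNv, Matrix.mulVec_zero]
    have := congrFun h4 j
    simpa [smul_eq_mul] using this
  have hann : N.det ∈ Submodule.annihilator (RingHom.ker (mu A S)) := by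
    rw [Submodule.mem_annihilator]
    intro z hz
    have hz' : z ∈ Ideal.span (Set.range x) := by rw [hx]; exact hz
    obtain ⟨c, hc⟩ := (Submodule.mem_span_range_iff_exists_fun _).mp hz'
    rw [smul_eq_mul, ← hc, Finset.mul_sum]
    refine Finset.sum_eq_zero fun k _ => ?_
    have h5 := hdet0 (Sum.inr k)
    simp only [hv, Sum.elim_inr] at h5
    rw [smul_eq_mul, mul_left_comm, h5, mul_zero]
  have hμdet : mu A S N.det = B.det := by
    rw [RingHom.map_det, RingHom.mapMatrix_apply]
    have hmap : N.map (mu A S) = Matrix.fromBlocks B 0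
        (Matrix.of fun k l => - (Q k l)) 1 := by
      rw [hN, Matrix.fromBlocks_map]
      ext j1 j2
      cases j1 with
      | inl i =>
        cases j2 with
        | inl l => simp [Matrix.map_apply, hι', lmul'_algebraMap]
        | inr k => simp [Matrix.map_apply, lmul'_of_mem (hC i k)]
      | inr k =>
        cases j2 with
        | inl l => simp [Matrix.map_apply, hι', lmul'_algebraMap]
        | inr k' =>
          simp [Matrix.map_apply, Matrix.one_apply, apply_ite (mu A S),
            lmul'_of_mem (hR k k')]
    rw [hmap, Matrix.det_fromBlocks_zero₁₂, Matrix.det_one, mul_one]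
  exact hμdet ▸ Ideal.mem_map_of_mem _ hann

end Aux4

/-- if the kernel of the multiplication map `μ : S ⊗[A] S → S` is generated
by `n` elements, then `𝔫_A(S)ⁿ ⊆ 𝔨_A(S) ⊆ 𝔫_A(S)`. -/
theorem stmt19 (A S : Type) [CommRing A] [CommRing S] [Algebra A S] (n : ℕ)
    (hgen : ∃ g : Fin n → (S ⊗[A] S),
      Ideal.span (Set.range g) =
        RingHom.ker (Algebra.TensorProduct.lmul' A (S := S)).toRingHom) :
    noetherDifferent A S ^ n ≤ kaehlerDifferent A S ∧
      kaehlerDifferent A S ≤ noetherDifferent A S := by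
  obtain ⟨x, hx⟩ := hgen
  have hx' : Ideal.span (Set.range x) = Jid A S := hx
  have hxk : ∀ k, x k ∈ Jid A S := fun k => hx' ▸ Ideal.subset_span ⟨k, rfl⟩
  constructor
  · have h1 : noetherDifferent A S ^ n
        ≤ (Submodule.annihilator (⊤ : Submodule S (Ω[S⁄A]))) ^ n :=
      Ideal.pow_right_mono noether_ann n
    exact h1.trans (ann_pow_le_fitt (fun k => (Jid A S).toCotangent ⟨x k, hxk k⟩)
      (span_cotangent x hx' hxk))
  · unfold kaehlerDifferent fittingIdeal
    rw [Ideal.span_le]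
    rintro d ⟨m, g, B, c, hspan, hrel, rfl⟩
    by_cases hc : Function.Injective c
    · have hbij : Function.Bijective c := by
        rw [Fintype.bijective_iff_injective_and_card]
        exact ⟨hc, by simp [Nat.zero_add]⟩
      set e : Fin m ≃ Fin (0 + m) := Equiv.ofBijective c hbij with he
      refine sq_det_mem_noether x hx' (g ∘ c) ?_ (B.submatrix id c) ?_
      · rw [Set.range_comp, hbij.2.range_eq, Set.image_univ, hspan]
      · intro i
        calc ∑ l, (B.submatrix id c) i l • (g ∘ c) l
            = ∑ l, (fun l' => B i l' • g l') (e l) := rfl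
          _ = ∑ l', B i l' • g l' := Equiv.sum_comp e (fun l' => B i l' • g l')
          _ = 0 := hrel i
    · obtain ⟨i, j, hcij, hij⟩ := Function.not_injective_iff.mp hc
      have hdz : (B.submatrix id c).det = 0 :=
        Matrix.det_zero_of_column_eq hij (fun k => by simp [Matrix.submatrix_apply, hcij])
      rw [SetLike.mem_coe, hdz]
      exact (noetherDifferent A S).zero_mem
end
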